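/- arXiv:2409.12132 — 6 statements merged into one kernel-verified Lean document; each statement's English description precedes it below -/
import Mathlib

section
/- Let α₁,…,αₙ ∈ ℕⁿ be linearly independent (as vectors in ℝⁿ). Then the map F : (ℂ*)ⁿ → (ℂ*)ⁿ defined by F(z) = (z^{α₁}, …, z^{αₙ}) (where z^α = z₁^{α_1}⋯zₙ^{α_n}) is proper, i.e., the preimage of every compact subset of (ℂ*)ⁿ is compact. -/
open scoped BigOperators

/-- If α₁,…,αₙ ∈ ℕⁿ are linearly independent over ℝ, then
    F(z) = (z^{α₁},…,z^{αₙ}) is a proper map (ℂ*)ⁿ → (ℂ*)ⁿ : the preimage of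
    every compact subset of (ℂ*)ⁿ is compact. -/
theorem monomial_map_proper (n : ℕ) (α : Fin n → Fin n → ℕ)
    (hli : LinearIndependent ℝ (fun j : Fin n => fun i : Fin n => (α j i : ℝ)))
    (K : Set (Fin n → ℂ)) (hK : IsCompact K) (hK' : K ⊆ {z | ∀ i, z i ≠ 0}) :
    IsCompact {z : Fin n → ℂ | (∀ i, z i ≠ 0) ∧
      (fun j : Fin n => ∏ i, z i ^ (α j i)) ∈ K} := by
  classical
  -- the matrix of exponents
  set A : Matrix (Fin n) (Fin n) ℝ := fun j i => (α j i : ℝ) with hA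
  have hAunit : IsUnit A := Matrix.linearIndependent_rows_iff_isUnit.mp hli
  have hAinv : A⁻¹ * A = 1 :=
    Matrix.nonsing_inv_mul A ((Matrix.isUnit_iff_isUnit_det A).mp hAunit)
  -- the "log of norms" map composed with A⁻¹
  set ψ : (Fin n → ℂ) → (Fin n → ℝ) :=
    fun w => Matrix.mulVec A⁻¹ (fun j => Real.log ‖w j‖) with hψ
  have hlincont : Continuous (Matrix.mulVec A⁻¹ : (Fin n → ℝ) → (Fin n → ℝ)) := by
    have h := (Matrix.mulVecLin A⁻¹).continuous_of_finiteDimensional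
    exact h
  have hψcont : ContinuousOn ψ {w : Fin n → ℂ | ∀ j, w j ≠ 0} := by
    apply Continuous.comp_continuousOn hlincont
    apply continuousOn_pi.mpr
    intro j
    apply ContinuousOn.comp (t := ({0}ᶜ : Set ℝ)) Real.continuousOn_log
      ((continuous_norm.comp (continuous_apply j)).continuousOn)
    intro w hw
    simp only [Set.mem_compl_iff, Set.mem_singleton_iff, Function.comp_apply,
      norm_eq_zero]
    exact hw j
  have hcomp : IsCompact (ψ '' K) := hK.image_of_continuousOn (hψcont.mono hK')
  obtain ⟨R, hR⟩ := hcomp.isBounded.subset_closedBall 0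
  -- the annulus bounds
  set c : ℝ := Real.exp (-R) with hc
  set C : ℝ := Real.exp R with hC
  have hcpos : 0 < c := Real.exp_pos _
  set B : Set (Fin n → ℂ) :=
    Set.pi Set.univ (fun _ : Fin n => {w : ℂ | c ≤ ‖w‖ ∧ ‖w‖ ≤ C}) with hB
  have hBcomp : IsCompact B := by
    apply isCompact_univ_pi
    intro i
    have : {w : ℂ | c ≤ ‖w‖ ∧ ‖w‖ ≤ C} =
        {w : ℂ | c ≤ ‖w‖} ∩ Metric.closedBall 0 C := by
      ext w; simp [mem_closedBall_zero_iff, and_comm]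
    rw [this]
    exact (isCompact_closedBall 0 C).inter_left
      (isClosed_le continuous_const continuous_norm)
  -- The monomial map is continuous on all of ℂⁿ
  set F : (Fin n → ℂ) → (Fin n → ℂ) := fun z => fun j => ∏ i, z i ^ (α j i) with hF
  have hFcont : Continuous F := by
    apply continuous_pi
    intro j
    exact continuous_finset_prod _ fun i _ => (continuous_apply i).pow _
  -- the key bound: preimage points lie in the annulus product B
  have key : ∀ z : Fin n → ℂ, (∀ i, z i ≠ 0) → F z ∈ K → z ∈ B := by
    intro z hz hzK
    set x : Fin n → ℝ := fun i => Real.log ‖z i‖ with hx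
    have hmul : Matrix.mulVec A x = fun j => Real.log ‖F z j‖ := by
      funext j
      simp only [Matrix.mulVec, dotProduct, hF]
      rw [norm_prod, Real.log_prod]
      · apply Finset.sum_congr rfl
        intro i _
        rw [norm_pow, Real.log_pow]
      · intro i _
        exact norm_ne_zero_iff.mpr (pow_ne_zero _ (hz i))
    have hxeq : ψ (F z) = x := by
      have h1 : ψ (F z) = Matrix.mulVec A⁻¹ (Matrix.mulVec A x) := by rw [hmul]
      rw [h1, Matrix.mulVec_mulVec, hAinv, Matrix.one_mulVec]
    have hxmem : ψ (F z) ∈ ψ '' K := Set.mem_image_of_mem _ hzK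
    have hxR : ‖x‖ ≤ R := by
      rw [← hxeq]
      simpa using mem_closedBall_zero_iff.mp (hR hxmem)
    intro i _
    have hxi : |x i| ≤ R := (norm_le_pi_norm x i).trans hxR
    rw [abs_le] at hxi
    have hzi : 0 < ‖z i‖ := norm_pos_iff.mpr (hz i)
    have hlog : ‖z i‖ = Real.exp (x i) := (Real.exp_log hzi).symm
    constructor
    · rw [hlog, hc]; exact Real.exp_le_exp.mpr hxi.1
    · rw [hlog, hC]; exact Real.exp_le_exp.mpr hxi.2
  have hset : {z : Fin n → ℂ | (∀ i, z i ≠ 0) ∧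
      (fun j : Fin n => ∏ i, z i ^ (α j i)) ∈ K} = B ∩ F ⁻¹' K := by
    ext z
    constructor
    · rintro ⟨hz, hzK⟩
      exact ⟨key z hz hzK, hzK⟩
    · rintro ⟨hzB, hzK⟩
      refine ⟨fun i => ?_, hzK⟩
      have := (hzB i (Set.mem_univ i)).1
      intro h
      rw [h] at this
      simp at this
      exact absurd this (not_le.mpr hcpos)
  rw [hset]
  exact hBcomp.inter_right (hK.isClosed.preimage hFcont)
end

section
/- Let P ⊂ ℝⁿ be a convex polytope with vertices in ℤⁿ, with nonempty interior, contained in the box [0,M]ⁿ for some M > 0. Then the Euclidean distance from P to ℤⁿ \ P is at least 1/(√n · (n−1)! · M^{n−1}). -/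
open scoped BigOperators

open scoped RealInnerProductSpace

theorem lemB {m n : ℕ} (r : Fin m → EuclideanSpace ℝ (Fin n)) (hr : LinearIndependent ℝ r) :
    ∃ e : Fin m → Fin n, Function.Injective e ∧
      (Matrix.of fun i j => r i (e j)).det ≠ 0 := by
  classical
  set c : Fin n → EuclideanSpace ℝ (Fin m) := fun j => WithLp.toLp 2 (fun i => r i j) with hc
  have hspan : Submodule.span ℝ (Set.range c) = ⊤ := by
    set K := Submodule.span ℝ (Set.range c)
    have hb : Kᗮ = ⊥ := by
      rw [Submodule.eq_bot_iff]
      intro x hx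
      have hx' : ∀ j, ⟪c j, x⟫ = 0 := fun j =>
        hx (c j) (Submodule.subset_span (Set.mem_range_self j))
      have hzero : ∑ i, x i • r i = 0 := by
        ext j
        have h1 := hx' j
        rw [real_inner_comm] at h1
        simp only [PiLp.inner_apply, RCLike.inner_apply, conj_trivial] at h1
        rw [WithLp.ofLp_sum, Finset.sum_apply]
        simp only [PiLp.smul_apply, smul_eq_mul, PiLp.zero_apply]
        exact (Finset.sum_congr rfl fun i _ => mul_comm _ _).trans h1
      have := Fintype.linearIndependent_iff.1 hr x hzero
      ext i; simp [this i]
    have h2 := Submodule.orthogonal_orthogonal K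
    rw [hb] at h2
    rw [← h2, Submodule.bot_orthogonal_eq_top]
  obtain ⟨s, hs_sub, hs_span, hs_li⟩ := exists_linearIndependent ℝ (Set.range c)
  have hs_fin : s.Finite := (Set.finite_range c).subset hs_sub
  haveI : Fintype s := hs_fin.fintype
  have hbasis : Module.Basis s ℝ (EuclideanSpace ℝ (Fin m)) :=
    Module.Basis.mk hs_li (by rw [Subtype.range_coe, hs_span, hspan])
  have hcard : Fintype.card s = m := by
    have := Module.finrank_eq_card_basis hbasis
    rw [finrank_euclideanSpace_fin] at this
    omega
  obtain ⟨eqv⟩ : Nonempty (Fin m ≃ s) :=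
    ⟨(Fintype.equivFinOfCardEq hcard).symm⟩
  have hmem : ∀ k : Fin m, ((eqv k : EuclideanSpace ℝ (Fin m))) ∈ Set.range c :=
    fun k => hs_sub (eqv k).2
  choose e he using hmem
  refine ⟨e, ?_, ?_⟩
  · intro k k' hkk'
    have : (eqv k : EuclideanSpace ℝ (Fin m)) = eqv k' := by rw [← he k, ← he k', hkk']
    exact eqv.injective (Subtype.ext this)
  · intro hdet
    obtain ⟨v, hv, hmv⟩ := (Matrix.exists_mulVec_eq_zero_iff).2 hdet
    have hli2 : LinearIndependent ℝ (fun k : Fin m => (eqv k : EuclideanSpace ℝ (Fin m))) :=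
      hs_li.comp eqv eqv.injective
    apply hv
    funext i0
    have key : ∑ j, v j • (fun k : Fin m => (eqv k : EuclideanSpace ℝ (Fin m))) j = 0 := by
      ext i
      have h3 := congrFun hmv i
      simp only [Matrix.mulVec, dotProduct, Matrix.of_apply, Pi.zero_apply] at h3
      rw [WithLp.ofLp_sum, Finset.sum_apply]
      simp only [PiLp.smul_apply, smul_eq_mul, PiLp.zero_apply]
      calc ∑ j, v j * (eqv j : EuclideanSpace ℝ (Fin m)) i
          = ∑ j, r i (e j) * v j := by
            apply Finset.sum_congr rfl
            intro j _
            rw [← he j, mul_comm]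
        _ = 0 := h3
    have := Fintype.linearIndependent_iff.1 hli2 v key
    simp [this i0]

theorem det_int {m : ℕ} (A : Matrix (Fin m) (Fin m) ℝ) (h : ∀ i j, ∃ k : ℤ, A i j = k) :
    ∃ k : ℤ, A.det = k := by
  choose K hK using h
  refine ⟨(Matrix.of K).det, ?_⟩
  have hA : A = (Int.castRingHom ℝ).mapMatrix (Matrix.of K) := by
    ext i j; simp [hK]
  rw [hA, ← RingHom.map_det]
  rfl

theorem exists_int_normal {n : ℕ} {M : ℝ} (hM : 1 ≤ M)
    (W : Finset (EuclideanSpace ℝ (Fin n)))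
    (hWlat : ∀ w ∈ W, ∀ i, ∃ k : ℤ, w i = (k:ℝ))
    (hWbox : ∀ w ∈ W, ∀ i, 0 ≤ w i ∧ w i ≤ M)
    {w₀ : EuclideanSpace ℝ (Fin n)} (hw₀ : w₀ ∈ W)
    {v : EuclideanSpace ℝ (Fin n)}
    (hv : v ∉ Submodule.span ℝ ((fun w => w - w₀) '' (W : Set (EuclideanSpace ℝ (Fin n))))) :
    ∃ a : EuclideanSpace ℝ (Fin n), (∀ i, ∃ k : ℤ, a i = (k:ℝ)) ∧
      (∀ w ∈ W, ⟪a, w - w₀⟫ = 0) ∧ ⟪a, v⟫ ≠ 0 ∧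
      ∀ i, |a i| ≤ (Nat.factorial (n-1) : ℝ) * M^(n-1) := by
  classical
  set S : Set (EuclideanSpace ℝ (Fin n)) :=
    (fun w => w - w₀) '' (W : Set (EuclideanSpace ℝ (Fin n))) with hS
  -- properties of elements of S
  have hSlat : ∀ s ∈ S, ∀ i, ∃ k : ℤ, s i = (k:ℝ) := by
    rintro s ⟨w, hw, rfl⟩ i
    obtain ⟨k1, hk1⟩ := hWlat w hw i
    obtain ⟨k2, hk2⟩ := hWlat w₀ hw₀ i
    exact ⟨k1 - k2, by push_cast [PiLp.sub_apply, hk1, hk2]; ring⟩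
  have hSbox : ∀ s ∈ S, ∀ i, |s i| ≤ M := by
    rintro s ⟨w, hw, rfl⟩ i
    have h1 := hWbox w hw i
    have h2 := hWbox w₀ hw₀ i
    show |(w - w₀) i| ≤ M
    rw [PiLp.sub_apply, abs_le]
    constructor <;> nlinarith [h1.1, h1.2, h2.1, h2.2]
  obtain ⟨t, ht_sub, ht_span, ht_li⟩ := exists_linearIndependent ℝ S
  have ht_fin : t.Finite := ((Set.toFinite S).subset ht_sub).subset (le_refl t)
  haveI : Fintype t := ht_fin.fintype
  set d := Fintype.card t with hd
  set eqv := (Fintype.equivFin t).symm with heqv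
  set b : Fin d → EuclideanSpace ℝ (Fin n) := fun k => ((eqv k : t) : EuclideanSpace ℝ (Fin n)) with hb
  have hb_li : LinearIndependent ℝ b := ht_li.comp eqv eqv.injective
  have hb_range : Set.range b = t := by
    ext x
    constructor
    · rintro ⟨k, rfl⟩; exact (eqv k).2
    · intro hx; exact ⟨eqv.symm ⟨x, hx⟩, by simp [hb]⟩
  have hb_mem : ∀ k, b k ∈ S := fun k => ht_sub (hb_range ▸ Set.mem_range_self k)
  -- snoc v
  have hv' : v ∉ Submodule.span ℝ (Set.range b) := by
    rw [hb_range, ht_span]; exact hv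
  set r : Fin (d+1) → EuclideanSpace ℝ (Fin n) := Fin.snoc b v with hr
  have hr_li : LinearIndependent ℝ r := linearIndependent_fin_snoc.2 ⟨hb_li, hv'⟩
  obtain ⟨e, he_inj, hdet⟩ := lemB r hr_li
  set A : Matrix (Fin (d+1)) (Fin (d+1)) ℝ := Matrix.of fun i j => r i (e j) with hA
  have hdn : d + 1 ≤ n := by
    have := Fintype.card_le_of_injective e he_inj
    simpa using this
  -- the normal vector
  set a : EuclideanSpace ℝ (Fin n) :=
    (WithLp.toLp 2 (fun i => (A.updateRow (Fin.last d) (fun j => (Pi.single i (1:ℝ) : Fin n → ℝ) (e j))).det) :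
      EuclideanSpace ℝ (Fin n)) with ha
  -- linearity
  have hGadd : ∀ x y : EuclideanSpace ℝ (Fin n),
      (A.updateRow (Fin.last d) (fun j => (x + y) (e j))).det
      = (A.updateRow (Fin.last d) (fun j => x (e j))).det
        + (A.updateRow (Fin.last d) (fun j => y (e j))).det := by
    intro x y
    rw [show (fun j => (x + y) (e j)) = (fun j => x (e j)) + (fun j => y (e j)) from rfl,
      Matrix.det_updateRow_add]
  have hGsmul : ∀ (c : ℝ) (x : EuclideanSpace ℝ (Fin n)),
      (A.updateRow (Fin.last d) (fun j => (c • x) (e j))).det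
      = c * (A.updateRow (Fin.last d) (fun j => x (e j))).det := by
    intro c x
    rw [show (fun j => (c • x) (e j)) = c • (fun j => x (e j)) from rfl,
      Matrix.det_updateRow_smul]
  set G : EuclideanSpace ℝ (Fin n) →ₗ[ℝ] ℝ :=
    { toFun := fun x => (A.updateRow (Fin.last d) (fun j => x (e j))).det,
      map_add' := hGadd, map_smul' := hGsmul } with hG
  have hlin : ∀ x : EuclideanSpace ℝ (Fin n), ⟪a, x⟫ = G x := by
    intro x
    have hx : x = ∑ i, x i • (WithLp.toLp 2 (Pi.single i (1:ℝ)) : EuclideanSpace ℝ (Fin n)) := by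
      ext i
      rw [WithLp.ofLp_sum, Finset.sum_apply]
      simp only [PiLp.smul_apply, smul_eq_mul]
      rw [Finset.sum_eq_single i]
      · simp
      · intro j _ hj; simp [Pi.single_apply, hj]
      · intro h; exact absurd (Finset.mem_univ i) h
    calc ⟪a, x⟫ = ∑ i, a i * x i := by simp [PiLp.inner_apply, mul_comm]
      _ = ∑ i, x i * G (WithLp.toLp 2 (Pi.single i (1:ℝ))) := by
          apply Finset.sum_congr rfl; intro i _; rw [mul_comm]; rfl
      _ = G (∑ i, x i • (WithLp.toLp 2 (Pi.single i (1:ℝ)) : EuclideanSpace ℝ (Fin n))) := by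
          rw [map_sum]
          apply Finset.sum_congr rfl; intro i _
          rw [map_smul]; rfl
      _ = G x := by rw [← hx]
  refine ⟨a, ?_, ?_, ?_, ?_⟩
  · -- integrality
    intro i
    apply det_int
    intro p q
    rcases eq_or_ne p (Fin.last d) with hp | hp
    · subst hp
      rw [Matrix.updateRow_self]
      rcases eq_or_ne (e q) i with h | h
      · exact ⟨1, by simp [Pi.single_apply, h]⟩
      · exact ⟨0, by simp [Pi.single_apply, h]⟩
    · rw [Matrix.updateRow_ne hp]
      obtain ⟨p', rfl⟩ := Fin.exists_castSucc_eq.2 hp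
      have : A p'.castSucc q = b p' (e q) := by simp [hA, hr, Fin.snoc_castSucc]
      rw [this]
      exact hSlat _ (hb_mem p') (e q)
  · -- orthogonality to W - w₀
    have hker : Submodule.span ℝ (Set.range b) ≤ LinearMap.ker ((innerₛₗ ℝ) a) := by
      rw [Submodule.span_le]
      rintro x ⟨k, rfl⟩
      simp only [SetLike.mem_coe, LinearMap.mem_ker]
      show ⟪a, b k⟫ = 0
      rw [hlin]
      show (A.updateRow (Fin.last d) (fun j => b k (e j))).det = 0
      have hrow : (fun j => b k (e j)) = A k.castSucc := by
        funext j; simp [hA, hr, Fin.snoc_castSucc]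
      rw [hrow]
      apply Matrix.det_zero_of_row_eq (i := k.castSucc) (j := Fin.last d)
      · exact (Fin.castSucc_lt_last k).ne
      · rw [Matrix.updateRow_ne (Fin.castSucc_lt_last k).ne, Matrix.updateRow_self]
    intro w hw
    have hmem : w - w₀ ∈ Submodule.span ℝ (Set.range b) := by
      rw [hb_range, ht_span]
      exact Submodule.subset_span ⟨w, hw, rfl⟩
    exact hker hmem
  · -- nonvanishing on v
    rw [hlin]
    show (A.updateRow (Fin.last d) (fun j => v (e j))).det ≠ 0
    have hrow : (fun j => v (e j)) = A (Fin.last d) := by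
      funext j; simp [hA, hr, Fin.snoc_last]
    rw [hrow, Matrix.updateRow_eq_self]
    exact hdet
  · -- bound
    intro i
    set B := A.updateRow (Fin.last d) (fun j => (Pi.single i (1:ℝ) : Fin n → ℝ) (e j)) with hB
    have hstep : a i = B.det := rfl
    have hMpos : (0:ℝ) < M := lt_of_lt_of_le one_pos hM
    have hfact : (Nat.factorial d : ℝ) * M^d ≤ (Nat.factorial (n-1) : ℝ) * M^(n-1) := by
      have hd1 : d ≤ n - 1 := by omega
      have h1 : (Nat.factorial d : ℝ) ≤ (Nat.factorial (n-1) : ℝ) := by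
        exact_mod_cast Nat.factorial_le hd1
      have h2 : M^d ≤ M^(n-1) := pow_le_pow_right₀ hM hd1
      have := mul_le_mul h1 h2 (by positivity) (by positivity)
      exact this
    have hminor : ∀ j : Fin (d+1),
        |(B.submatrix (Fin.last d).succAbove j.succAbove).det| ≤ (Nat.factorial d : ℝ) * M^d := by
      intro j
      have hent : ∀ p q, |(B.submatrix (Fin.last d).succAbove j.succAbove) p q| ≤ M := by
        intro p q
        rw [Matrix.submatrix_apply, Fin.succAbove_last]
        rw [hB, Matrix.updateRow_ne (Fin.castSucc_lt_last p).ne]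
        have : A p.castSucc (j.succAbove q) = b p (e (j.succAbove q)) := by
          simp [hA, hr, Fin.snoc_castSucc]
        rw [this]
        exact hSbox _ (hb_mem p) _
      have hle := Matrix.det_le (abv := (AbsoluteValue.abs : AbsoluteValue ℝ ℝ)) hent
      rw [nsmul_eq_mul] at hle
      simp only [Fintype.card_fin] at hle
      exact hle
    have hsum1 : (∑ j : Fin (d+1), |B (Fin.last d) j|) ≤ 1 := by
      have hval : ∀ j : Fin (d+1), |B (Fin.last d) j| = if e j = i then 1 else 0 := by
        intro j
        rw [hB, Matrix.updateRow_self]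
        rcases eq_or_ne (e j) i with h | h <;> simp [Pi.single_apply, h]
      rw [Finset.sum_congr rfl (fun j _ => hval j), Finset.sum_boole]
      have : (Finset.univ.filter (fun j : Fin (d+1) => e j = i)).card ≤ 1 := by
        apply Finset.card_le_one.2
        intro p hp q hq
        simp only [Finset.mem_filter] at hp hq
        exact he_inj (hp.2.trans hq.2.symm)
      exact_mod_cast this
    rw [hstep, Matrix.det_succ_row B (Fin.last d)]
    refine le_trans (Finset.abs_sum_le_sum_abs _ _) ?_
    have h1 : ∀ j : Fin (d+1),
        |(-1:ℝ) ^ ((Fin.last d : ℕ) + (j:ℕ)) * B (Fin.last d) j *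
          (B.submatrix (Fin.last d).succAbove j.succAbove).det|
        ≤ |B (Fin.last d) j| * ((Nat.factorial d : ℝ) * M^d) := by
      intro j
      rw [abs_mul, abs_mul, abs_pow, abs_neg, abs_one, one_pow, one_mul]
      exact mul_le_mul_of_nonneg_left (hminor j) (abs_nonneg _)
    refine le_trans (Finset.sum_le_sum (fun j _ => h1 j)) ?_
    rw [← Finset.sum_mul]
    calc (∑ j : Fin (d+1), |B (Fin.last d) j|) * ((Nat.factorial d : ℝ) * M^d)
        ≤ 1 * ((Nat.factorial d : ℝ) * M^d) :=
          mul_le_mul_of_nonneg_right hsum1 (by positivity)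
      _ = (Nat.factorial d : ℝ) * M^d := one_mul _
      _ ≤ (Nat.factorial (n-1) : ℝ) * M^(n-1) := hfact

theorem inner_int_aux {n : ℕ} {a b : EuclideanSpace ℝ (Fin n)}
    (ha : ∀ i, ∃ k : ℤ, a i = (k:ℝ)) (hb : ∀ i, ∃ k : ℤ, b i = (k:ℝ)) :
    ∃ k : ℤ, ⟪a, b⟫ = (k:ℝ) := by
  choose ka hka using ha
  choose kb hkb using hb
  refine ⟨∑ i, ka i * kb i, ?_⟩
  rw [PiLp.inner_apply]
  push_cast
  apply Finset.sum_congr rfl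
  intro i _
  simp [hka, hkb, RCLike.inner_apply]
  ring

theorem main_aux (n : ℕ) (M : ℝ) (hM : 0 < M) (hn : 0 < n) (hM1 : 1 ≤ M)
    (V : Finset (EuclideanSpace ℝ (Fin n)))
    (hVlat : ∀ v ∈ V, ∀ i, ∃ k : ℕ, v i = (k : ℝ))
    (hVbox : ∀ v ∈ V, ∀ i, 0 ≤ v i ∧ v i ≤ M)
    (x : EuclideanSpace ℝ (Fin n)) (hx : x ∈ convexHull ℝ (V : Set (EuclideanSpace ℝ (Fin n))))
    (y : EuclideanSpace ℝ (Fin n)) (hylat : ∀ i, ∃ k : ℤ, y i = (k : ℝ))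
    (hyP : y ∉ convexHull ℝ (V : Set (EuclideanSpace ℝ (Fin n)))) :
    1 / (Real.sqrt n * (Nat.factorial (n - 1) : ℝ) * M ^ (n - 1)) ≤ dist x y := by
  classical
  set P : Set (EuclideanSpace ℝ (Fin n)) := convexHull ℝ (V : Set (EuclideanSpace ℝ (Fin n))) with hP
  have hconv : Convex ℝ P := convex_convexHull ℝ _
  have hcompact : IsCompact P := (V.finite_toSet).isCompact_convexHull ℝ
  have hne : P.Nonempty := ⟨x, hx⟩
  obtain ⟨z, hzP, hz_inf⟩ :=
    exists_norm_eq_iInf_of_complete_convex hne hcompact.isClosed.isComplete hconv y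
  have hvar : ∀ w ∈ P, ⟪y - z, w - z⟫ ≤ 0 :=
    (norm_eq_iInf_iff_real_inner_le_zero hconv hzP).1 hz_inf
  have hmin : ‖y - z‖ ≤ ‖y - x‖ := by
    rw [hz_inf]
    exact ciInf_le ⟨0, Set.forall_mem_range.2 fun _ => norm_nonneg _⟩ (⟨x, hx⟩ : P)
  set u : EuclideanSpace ℝ (Fin n) := y - z with hu
  have hu0 : u ≠ 0 := sub_ne_zero.2 fun h => hyP (h ▸ hzP)
  -- weights of z
  have hz' : z ∈ {p : EuclideanSpace ℝ (Fin n) | ∃ w : EuclideanSpace ℝ (Fin n) → ℝ,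
      (∀ q ∈ V, 0 ≤ w q) ∧ ∑ q ∈ V, w q = 1 ∧ V.centerMass w id = p} := by
    rw [← Finset.convexHull_eq]; exact hzP
  obtain ⟨wt, hwt0, hwt1, hwtz⟩ := hz'
  have hleV : ∀ p ∈ V, ⟪u, p⟫ ≤ ⟪u, z⟫ := by
    intro p hp
    have := hvar p (subset_convexHull ℝ _ hp)
    rw [inner_sub_right] at this
    linarith
  have hinnz : ∑ p ∈ V, wt p * ⟪u, p⟫ = ⟪u, z⟫ := by
    rw [← hwtz, Finset.centerMass_eq_of_sum_1 _ _ hwt1, inner_sum]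
    apply Finset.sum_congr rfl
    intro p _
    rw [id_eq, real_inner_smul_right]
  have hsum0 : ∑ p ∈ V, wt p * (⟪u, z⟫ - ⟪u, p⟫) = 0 := by
    simp only [mul_sub]
    rw [Finset.sum_sub_distrib, ← Finset.sum_mul, hwt1, one_mul, hinnz, sub_self]
  have hterm0 : ∀ p ∈ V, wt p * (⟪u, z⟫ - ⟪u, p⟫) = 0 :=
    (Finset.sum_eq_zero_iff_of_nonneg
      (fun p hp => mul_nonneg (hwt0 p hp) (sub_nonneg.2 (hleV p hp)))).1 hsum0
  set W : Finset (EuclideanSpace ℝ (Fin n)) := V.filter (fun p => wt p ≠ 0) with hW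
  have hWsub : W ⊆ V := Finset.filter_subset _ _
  have hWinner : ∀ p ∈ W, ⟪u, p⟫ = ⟪u, z⟫ := by
    intro p hp
    rw [hW, Finset.mem_filter] at hp
    have := hterm0 p hp.1
    rcases mul_eq_zero.1 this with h | h
    · exact absurd h hp.2
    · linarith [sub_eq_zero.1 h]
  have hsumW : ∑ p ∈ W, wt p = 1 := by
    rw [hW, Finset.sum_filter_ne_zero, hwt1]
  have hzW : z ∈ convexHull ℝ (W : Set (EuclideanSpace ℝ (Fin n))) := by
    have h1 : W.centerMass wt id = z := by
      rw [hW, Finset.centerMass_filter_ne_zero, hwtz]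
    rw [← h1]
    exact W.centerMass_mem_convexHull (fun p hp => hwt0 p (hWsub hp))
      (by rw [hsumW]; norm_num) (fun p hp => hp)
  obtain ⟨w₀, hw₀⟩ : W.Nonempty := Finset.nonempty_of_sum_ne_zero (by rw [hsumW]; norm_num)
  -- v ∉ span
  set v : EuclideanSpace ℝ (Fin n) := y - w₀ with hv
  have huv : ⟪u, v⟫ ≠ 0 := by
    have h1 : ⟪u, v⟫ = ⟪u, y⟫ - ⟪u, w₀⟫ := inner_sub_right u y w₀
    have h2 : ⟪u, w₀⟫ = ⟪u, z⟫ := hWinner w₀ hw₀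
    have h3 : ⟪u, y⟫ - ⟪u, z⟫ = ⟪u, u⟫ := by rw [← inner_sub_right]
    rw [h1, h2, h3]
    exact inner_self_ne_zero.2 hu0
  have hvspan : v ∉ Submodule.span ℝ
      ((fun w => w - w₀) '' (W : Set (EuclideanSpace ℝ (Fin n)))) := by
    intro hmem
    apply huv
    have hker : Submodule.span ℝ ((fun w => w - w₀) '' (W : Set (EuclideanSpace ℝ (Fin n))))
        ≤ LinearMap.ker ((innerₛₗ ℝ) u) := by
      rw [Submodule.span_le]
      rintro s ⟨w, hw, rfl⟩
      simp only [SetLike.mem_coe, LinearMap.mem_ker]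
      show ⟪u, w - w₀⟫ = 0
      rw [inner_sub_right, hWinner w hw, hWinner w₀ hw₀, sub_self]
    exact hker hmem
  obtain ⟨a, halat, haperp, hav, habnd⟩ := exists_int_normal hM1 W
    (fun w hw i => (hVlat w (hWsub hw) i).elim (fun k hk => ⟨(k:ℤ), by exact_mod_cast hk⟩))
    (fun w hw i => hVbox w (hWsub hw) i) hw₀ hvspan
  -- a is constant on convexHull W
  have hinnz2 : ⟪a, z⟫ = ⟪a, w₀⟫ := by
    have hhyp : convexHull ℝ (W : Set (EuclideanSpace ℝ (Fin n)))
        ⊆ {p | ((innerₛₗ ℝ) a) p = ⟪a, w₀⟫} := by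
      apply convexHull_min
      · intro p hp
        have := haperp p hp
        rw [inner_sub_right] at this
        simp only [Set.mem_setOf_eq]
        show ⟪a, p⟫ = ⟪a, w₀⟫
        linarith
      · exact convex_hyperplane (IsLinearMap.mk ((innerₛₗ ℝ) a).map_add
          ((innerₛₗ ℝ) a).map_smul) _
    exact hhyp hzW
  -- integer gap
  have hw₀lat : ∀ i, ∃ k : ℤ, (w₀ : EuclideanSpace ℝ (Fin n)) i = (k:ℝ) :=
    fun i => (hVlat w₀ (hWsub hw₀) i).elim (fun k hk => ⟨(k:ℤ), by exact_mod_cast hk⟩)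
  obtain ⟨ky, hky⟩ := inner_int_aux halat hylat
  obtain ⟨kw, hkw⟩ := inner_int_aux halat hw₀lat
  have hgap : (1:ℝ) ≤ |⟪a, y - z⟫| := by
    rw [inner_sub_right, hinnz2, hky, hkw]
    have hne0 : ky - kw ≠ 0 := by
      intro h
      apply hav
      rw [hv, inner_sub_right, hky, hkw]
      have : (ky:ℝ) = kw := by exact_mod_cast sub_eq_zero.1 (by exact_mod_cast h)
      rw [this, sub_self]
    calc (1:ℝ) = ((1:ℤ):ℝ) := by norm_num
      _ ≤ |((ky - kw : ℤ) : ℝ)| := by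
          rw [← Int.cast_abs]
          exact_mod_cast Int.one_le_abs hne0
      _ = |(ky:ℝ) - kw| := by push_cast; ring_nf
  -- norm bound on a
  set C : ℝ := (Nat.factorial (n-1) : ℝ) * M^(n-1) with hC
  have hCpos : 0 < C := by positivity
  have hanorm : ‖a‖ ≤ Real.sqrt n * C := by
    rw [EuclideanSpace.norm_eq]
    have h1 : ∑ i, ‖a i‖^2 ≤ n * C^2 := by
      calc ∑ i, ‖a i‖^2 ≤ ∑ _i : Fin n, C^2 := by
            apply Finset.sum_le_sum
            intro i _
            rw [Real.norm_eq_abs]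
            exact pow_le_pow_left₀ (abs_nonneg _) (habnd i) 2
        _ = n * C^2 := by rw [Finset.sum_const, Finset.card_univ, Fintype.card_fin,
            nsmul_eq_mul]
    calc Real.sqrt (∑ i, ‖a i‖^2) ≤ Real.sqrt (n * C^2) := Real.sqrt_le_sqrt h1
      _ = Real.sqrt n * C := by
          rw [Real.sqrt_mul (Nat.cast_nonneg n), Real.sqrt_sq hCpos.le]
  -- finish
  have hsn : 0 < Real.sqrt n := Real.sqrt_pos.2 (by exact_mod_cast hn)
  have hchain : 1 ≤ (Real.sqrt n * C) * dist x y := by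
    have h1 : |⟪a, y - z⟫| ≤ ‖a‖ * ‖y - z‖ := abs_real_inner_le_norm a (y - z)
    have h2 : ‖y - x‖ = dist x y := by rw [dist_eq_norm, norm_sub_rev]
    have h3 : ‖a‖ * ‖y - z‖ ≤ (Real.sqrt n * C) * dist x y := by
      rw [← h2]
      exact mul_le_mul hanorm hmin (norm_nonneg _) (by positivity)
    linarith
  rw [div_le_iff₀ (by positivity), mul_assoc]
  calc (1:ℝ) ≤ (Real.sqrt n * C) * dist x y := hchain
    _ = dist x y * (Real.sqrt n * C) := mul_comm _ _

/-- An integral convex polytope P ⊂ [0,M]ⁿ with nonempty interior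
    has Euclidean distance at least 1/(√n · (n−1)! · M^{n−1}) to the lattice
    points outside it. -/
theorem integral_polytope_lattice_dist (n : ℕ) (M : ℝ) (hM : 0 < M)
    (V : Finset (EuclideanSpace ℝ (Fin n)))
    (hVlat : ∀ v ∈ V, ∀ i, ∃ k : ℕ, v i = (k : ℝ))
    (hVbox : ∀ v ∈ V, ∀ i, 0 ≤ v i ∧ v i ≤ M)
    (P : Set (EuclideanSpace ℝ (Fin n))) (hP : P = convexHull ℝ (V : Set (EuclideanSpace ℝ (Fin n))))
    (hint : (interior P).Nonempty) :
    ∀ x ∈ P, ∀ y : EuclideanSpace ℝ (Fin n),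
      (∀ i, ∃ k : ℤ, y i = (k : ℝ)) → y ∉ P →
      1 / (Real.sqrt n * (Nat.factorial (n - 1) : ℝ) * M ^ (n - 1)) ≤ dist x y := by
  intro x hx y hylat hyP
  rcases Nat.eq_zero_or_pos n with h0 | hn
  · subst h0
    have hxy : y = x := PiLp.ext (fun i => i.elim0)
    exact absurd (hxy ▸ hx) hyP
  have hM1 : 1 ≤ M := by
    by_contra hlt
    push_neg at hlt
    have hV0 : (V : Set (EuclideanSpace ℝ (Fin n))) ⊆ {0} := by
      intro p hp
      have hp0 : p = 0 := by
        ext i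
        obtain ⟨k, hk⟩ := hVlat p hp i
        have h2 := (hVbox p hp i).2
        rw [hk] at h2 ⊢
        have hk0 : k = 0 := by
          by_contra hk0
          have : (1:ℝ) ≤ (k:ℝ) := by exact_mod_cast Nat.one_le_iff_ne_zero.2 hk0
          linarith
        simp [hk0]
      simpa [hp0]
    have hP0 : P ⊆ {0} := by
      rw [hP]
      calc convexHull ℝ (V : Set (EuclideanSpace ℝ (Fin n)))
          ⊆ convexHull ℝ {0} := convexHull_mono hV0
        _ = {0} := convexHull_singleton 0
    obtain ⟨p, hp⟩ := hint
    haveI : Nontrivial (EuclideanSpace ℝ (Fin n)) := by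
      refine ⟨0, EuclideanSpace.single ⟨0, hn⟩ (1:ℝ), ?_⟩
      intro h
      have := congrFun (congrArg WithLp.ofLp h) ⟨0, hn⟩
      simp [EuclideanSpace.single_apply] at this
    have hmem : p ∈ interior ({0} : Set (EuclideanSpace ℝ (Fin n))) := interior_mono hP0 hp
    rw [interior_singleton] at hmem
    exact hmem
  rw [hP] at hx hyP
  exact main_aux n M hM hn hM1 V hVlat hVbox x hx y hylat hyP
end

section
/- Let S ⊂ ℝ₊ⁿ be a compact convex set with 0 ∈ S and nonempty interior, and let K ⊂ (ℝ₊*)ⁿ (points with all coordinates real and strictly positive) be compact. Then the S-hull K̂^S is a compact subset of (ℝ₊*)ⁿ; in particular K̂^S ∩ (ℂⁿ \ (ℂ*)ⁿ) = ∅ and K̂^S ⊂ ℝⁿ. -/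
open scoped BigOperators

noncomputable section

/-- `p` is a polynomial of the class `P^S(ℂⁿ)`: for some `m`, all exponents of `p`
    lie in `(mS) ∩ ℕⁿ` (equivalently in the cone `ℝ₊S`). -/
def IsPolyS {n : ℕ} (S : Set (Fin n → ℝ)) (p : (Fin n → ℂ) → ℂ) : Prop :=
  ∃ (m : ℕ) (c : (Fin n → ℕ) →₀ ℂ),
    (∀ α ∈ c.support, ∃ s ∈ S, (fun i => (α i : ℝ)) = (m : ℝ) • s) ∧
    p = fun z => ∑ α ∈ c.support, c α * ∏ i, z i ^ (α i)

/-- The `S`-hull of a set `K ⊂ ℂⁿ`. -/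
def hullS {n : ℕ} (S : Set (Fin n → ℝ)) (K : Set (Fin n → ℂ)) : Set (Fin n → ℂ) :=
  {z | ∀ p, IsPolyS S p → ‖p z‖ ≤ sSup ((fun w => ‖p w‖) '' K)}


lemma norm_le_of_normSq_le {a b : ℂ} (h : Complex.normSq a ≤ Complex.normSq b) : ‖a‖ ≤ ‖b‖ := by
  show Real.sqrt _ ≤ Real.sqrt _
  exact Real.sqrt_le_sqrt h

lemma seg_bound {u v s : ℝ} (h1 : u ≤ s) (h2 : s ≤ v) (t : ℂ) :
    ‖(s:ℂ) - t‖ ≤ max ‖(u:ℂ) - t‖ ‖(v:ℂ) - t‖ := by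
  rcases le_total t.re s with h | h
  · refine le_max_of_le_right (norm_le_of_normSq_le ?_)
    simp only [Complex.normSq_apply, Complex.sub_re, Complex.ofReal_re, Complex.sub_im,
      Complex.ofReal_im]
    nlinarith [sq_nonneg (v - s)]
  · refine le_max_of_le_left (norm_le_of_normSq_le ?_)
    simp only [Complex.normSq_apply, Complex.sub_re, Complex.ofReal_re, Complex.sub_im,
      Complex.ofReal_im]
    nlinarith [sq_nonneg (s - u)]

lemma no_pos_im {u v : ℝ} (ξ : ℂ)
    (h : ∀ t : ℂ, ‖ξ - t‖ ≤ max ‖(u:ℂ) - t‖ ‖(v:ℂ) - t‖) : ¬ 0 < ξ.im := by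
  intro him
  set C : ℝ := max |u - ξ.re| |v - ξ.re| with hC
  set R : ℝ := (C^2 + 1)/(2*ξ.im) with hR
  have hRpos : 0 < R := by
    apply div_pos ?_ (by linarith)
    positivity
  have h5 : 2*ξ.im*R = C^2+1 := by rw [hR]; field_simp
  set t : ℂ := (ξ.re : ℂ) - (R:ℂ)*Complex.I with ht
  have h1 : ξ - t = ((ξ.im + R : ℝ):ℂ) * Complex.I := by
    apply Complex.ext <;> simp [ht]
  have h2 : ‖ξ - t‖ = ξ.im + R := by
    rw [h1, norm_mul, Complex.norm_I, mul_one, Complex.norm_real,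
      Real.norm_of_nonneg (by linarith)]
  have h3 : ∀ x : ℝ, ‖(x:ℂ) - t‖^2 = (x - ξ.re)^2 + R^2 := by
    intro x
    rw [Complex.sq_norm]
    simp [ht, Complex.normSq_apply]
    ring
  have h4 : (ξ.im + R)^2 ≤ C^2 + R^2 := by
    have hht := h t
    rw [h2] at hht
    rcases max_cases ‖(u:ℂ) - t‖ ‖(v:ℂ) - t‖ with ⟨he, _⟩ | ⟨he, _⟩ <;> rw [he] at hht
    · calc (ξ.im + R)^2 ≤ ‖(u:ℂ) - t‖^2 := by
            apply pow_le_pow_left₀ (by linarith) hht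
          _ = (u - ξ.re)^2 + R^2 := h3 u
          _ ≤ C^2 + R^2 := by
            have h6 : |u - ξ.re| ≤ C := le_max_left _ _
            nlinarith [abs_nonneg (u - ξ.re), sq_abs (u - ξ.re)]
    · calc (ξ.im + R)^2 ≤ ‖(v:ℂ) - t‖^2 := by
            apply pow_le_pow_left₀ (by linarith) hht
          _ = (v - ξ.re)^2 + R^2 := h3 v
          _ ≤ C^2 + R^2 := by
            have h6 : |v - ξ.re| ≤ C := le_max_right _ _
            nlinarith [abs_nonneg (v - ξ.re), sq_abs (v - ξ.re)]
  nlinarith [sq_nonneg ξ.im]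

lemma disc_lemma {u v : ℝ} (ζ : ℂ) (huv : u ≤ v)
    (h : ∀ t : ℂ, ‖ζ - t‖ ≤ max ‖(u:ℂ) - t‖ ‖(v:ℂ) - t‖) :
    ζ.im = 0 ∧ u ≤ ζ.re ∧ ζ.re ≤ v := by
  have hconj : ∀ t : ℂ, ‖(starRingEnd ℂ) ζ - t‖ ≤ max ‖(u:ℂ) - t‖ ‖(v:ℂ) - t‖ := by
    intro t
    have e1 : (starRingEnd ℂ) ζ - t = (starRingEnd ℂ) (ζ - (starRingEnd ℂ) t) := by
      simp [map_sub]
    have e2 : (u:ℂ) - (starRingEnd ℂ) t = (starRingEnd ℂ) ((u:ℂ) - t) := by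
      simp [map_sub]
    have e3 : (v:ℂ) - (starRingEnd ℂ) t = (starRingEnd ℂ) ((v:ℂ) - t) := by
      simp [map_sub]
    calc ‖(starRingEnd ℂ) ζ - t‖ = ‖ζ - (starRingEnd ℂ) t‖ := by
          rw [e1, RCLike.norm_conj]
      _ ≤ max ‖(u:ℂ) - (starRingEnd ℂ) t‖ ‖(v:ℂ) - (starRingEnd ℂ) t‖ := h _
      _ = max ‖(u:ℂ) - t‖ ‖(v:ℂ) - t‖ := by rw [e2, e3, RCLike.norm_conj, RCLike.norm_conj]
  have him1 := no_pos_im ζ h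
  have him2 := no_pos_im _ hconj
  rw [Complex.conj_im] at him2
  have him : ζ.im = 0 := by push_neg at him1 him2; linarith
  refine ⟨him, ?_, ?_⟩
  · by_contra hlt
    push_neg at hlt
    set R : ℝ := 1 + |u| + |v| with hRdef
    have hht := h ((R:ℝ):ℂ)
    have e1 : ‖(u:ℂ) - ((R:ℝ):ℂ)‖ = R - u := by
      rw [← Complex.ofReal_sub, Complex.norm_real, Real.norm_eq_abs,
        abs_of_nonpos (by cases abs_cases u <;> cases abs_cases u <;> cases abs_cases v <;> linarith)]
      ring
    have e2 : ‖(v:ℂ) - ((R:ℝ):ℂ)‖ = R - v := by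
      rw [← Complex.ofReal_sub, Complex.norm_real, Real.norm_eq_abs,
        abs_of_nonpos (by cases abs_cases u <;> cases abs_cases v <;> linarith)]
      ring
    have e3 : R - ζ.re ≤ ‖ζ - ((R:ℝ):ℂ)‖ := by
      calc R - ζ.re ≤ |ζ.re - R| := by cases abs_cases (ζ.re - R) <;> linarith
        _ = |(ζ - ((R:ℝ):ℂ)).re| := by simp
        _ ≤ ‖ζ - ((R:ℝ):ℂ)‖ := Complex.abs_re_le_norm _
    rw [e1, e2] at hht
    have : max (R - u) (R - v) = R - u := by
      rcases max_cases (R-u) (R-v) with ⟨he,_⟩|⟨he,h2⟩ <;> [exact he; linarith]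
    rw [this] at hht
    linarith
  · by_contra hlt
    push_neg at hlt
    set R : ℝ := 1 + |u| + |v| with hRdef
    have hht := h ((-R:ℝ):ℂ)
    have e1 : ‖(u:ℂ) - ((-R:ℝ):ℂ)‖ = u + R := by
      rw [← Complex.ofReal_sub, Complex.norm_real, Real.norm_eq_abs,
        abs_of_nonneg (by cases abs_cases u <;> cases abs_cases u <;> cases abs_cases v <;> linarith)]
      ring
    have e2 : ‖(v:ℂ) - ((-R:ℝ):ℂ)‖ = v + R := by
      rw [← Complex.ofReal_sub, Complex.norm_real, Real.norm_eq_abs,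
        abs_of_nonneg (by cases abs_cases u <;> cases abs_cases v <;> linarith)]
      ring
    have e3 : ζ.re + R ≤ ‖ζ - ((-R:ℝ):ℂ)‖ := by
      calc ζ.re + R ≤ |ζ.re + R| := le_abs_self _
        _ = |(ζ - ((-R:ℝ):ℂ)).re| := by simp
        _ ≤ ‖ζ - ((-R:ℝ):ℂ)‖ := Complex.abs_re_le_norm _
    rw [e1, e2] at hht
    have : max (u + R) (v + R) = v + R := by
      rcases max_cases (u+R) (v+R) with ⟨he,h2⟩|⟨he,_⟩ <;> [linarith; exact he]
    rw [this] at hht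
    linarith

lemma IsPolyS.continuous {n : ℕ} {S : Set (Fin n → ℝ)} {p : (Fin n → ℂ) → ℂ}
    (h : IsPolyS S p) : Continuous p := by
  obtain ⟨m, c, -, rfl⟩ := h
  refine continuous_finset_sum _ fun α _ => Continuous.mul continuous_const ?_
  exact continuous_finset_prod _ fun i _ => (continuous_apply i).pow _

lemma isPolyS_const_sub_monomial {n : ℕ} {S : Set (Fin n → ℝ)} (hS0 : (0 : Fin n → ℝ) ∈ S)
    (m : ℕ) (γ : Fin n → ℕ) (hγ : ∃ s ∈ S, (fun i => (γ i : ℝ)) = (m : ℝ) • s) (t : ℂ) :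
    IsPolyS S (fun z => t - ∏ i, z i ^ γ i) := by
  refine ⟨m, Finsupp.single 0 t - Finsupp.single γ 1, ?_, ?_⟩
  · intro α hα
    have := Finsupp.support_sub hα
    rcases Finset.mem_union.1 this with h | h
    · have h0 : α = 0 := Finset.mem_singleton.1 (Finsupp.support_single_subset h)
      subst h0
      exact ⟨0, hS0, by funext i; simp⟩
    · have h0 : α = γ := Finset.mem_singleton.1 (Finsupp.support_single_subset h)
      subst h0
      exact hγ
  · funext z
    have key : ∀ c : (Fin n → ℕ) →₀ ℂ,
        (∑ α ∈ c.support, c α * ∏ i, z i ^ (α i)) =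
          c.sum (fun α a => a * ∏ i, z i ^ (α i)) := fun _ => rfl
    rw [key, Finsupp.sum_sub_index (by intro a b₁ b₂; ring)]
    rw [Finsupp.sum_single_index (by simp), Finsupp.sum_single_index (by simp)]
    simp

lemma key_lemma {n : ℕ} {S : Set (Fin n → ℝ)} (hS0 : (0 : Fin n → ℝ) ∈ S)
    {K : Set (Fin n → ℂ)} (hK : IsCompact K) (hne : K.Nonempty)
    (hKpos : K ⊆ {z | ∀ i, (z i).im = 0 ∧ 0 < (z i).re})
    (m : ℕ) (γ : Fin n → ℕ) (hγ : ∃ s ∈ S, (fun i => (γ i : ℝ)) = (m : ℝ) • s) :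
    ∃ u v : ℝ, 0 < u ∧ u ≤ v ∧ ∀ z ∈ hullS S K,
      (∏ i, z i ^ γ i).im = 0 ∧ u ≤ (∏ i, z i ^ γ i).re ∧ (∏ i, z i ^ γ i).re ≤ v := by
  set G : (Fin n → ℂ) → ℝ := fun w => ∏ i, (w i).re ^ γ i with hG
  have hGcont : Continuous G :=
    continuous_finset_prod _ fun i _ => (Complex.continuous_re.comp (continuous_apply i)).pow _
  obtain ⟨w₁, hw₁, hmin⟩ := hK.exists_isMinOn hne hGcont.continuousOn
  obtain ⟨w₂, hw₂, hmax⟩ := hK.exists_isMaxOn hne hGcont.continuousOn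
  refine ⟨G w₁, G w₂, ?_, hmin hw₂, ?_⟩
  · exact Finset.prod_pos fun i _ => pow_pos (hKpos hw₁ i).2 _
  · intro z hz
    have hwreal : ∀ w ∈ K, (∏ i, w i ^ γ i) = ((G w : ℝ) : ℂ) := by
      intro w hw
      have hre : ∀ i, w i = ((w i).re : ℂ) := fun i => by
        apply Complex.ext <;> simp [(hKpos hw i).1]
      rw [hG]
      push_cast
      exact Finset.prod_congr rfl fun i _ => by rw [← hre i]
    refine disc_lemma _ (hmin hw₂) fun t => ?_
    have hp := hz _ (isPolyS_const_sub_monomial hS0 m γ hγ t)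
    rw [norm_sub_rev]
    refine le_trans hp (Real.sSup_le ?_ (le_trans (norm_nonneg _) (le_max_left _ _)))
    rintro y ⟨w, hw, rfl⟩
    simp only
    rw [hwreal w hw, norm_sub_rev]
    exact seg_bound (hmin hw) (hmax hw) t

-- closedness of the hull
lemma hullS_isClosed {n : ℕ} (S : Set (Fin n → ℝ)) (K : Set (Fin n → ℂ)) :
    IsClosed (hullS S K) := by
  have : hullS S K = ⋂ (p : (Fin n → ℂ) → ℂ) (_ : IsPolyS S p),
      {z | ‖p z‖ ≤ sSup ((fun w => ‖p w‖) '' K)} := by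
    ext z; simp [hullS, Set.mem_iInter]
  rw [this]
  exact isClosed_iInter fun p => isClosed_iInter fun hp =>
    isClosed_le (hp.continuous.norm) continuous_const

-- empty case
lemma hullS_empty {n : ℕ} (S : Set (Fin n → ℝ)) (hS0 : (0 : Fin n → ℝ) ∈ S) :
    hullS S (∅ : Set (Fin n → ℂ)) = ∅ := by
  ext z
  simp only [hullS, Set.mem_setOf_eq, Set.image_empty, Real.sSup_empty, Set.mem_empty_iff_false,
    iff_false]
  push_neg
  refine ⟨fun _ => 1, ⟨0, Finsupp.single 0 1, ?_, ?_⟩, by norm_num⟩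
  · intro α hα
    have h0 : α = 0 := Finset.mem_singleton.1 (Finsupp.support_single_subset hα)
    subst h0
    exact ⟨0, hS0, by funext i; simp⟩
  · funext z
    rw [Finsupp.support_single_ne_zero _ one_ne_zero]
    simp


theorem hull_of_positive_compact (n : ℕ) (S : Set (Fin n → ℝ))
    (hScomp : IsCompact S) (hSconv : Convex ℝ S) (hS0 : (0 : Fin n → ℝ) ∈ S)
    (hSpos : ∀ s ∈ S, ∀ i, 0 ≤ s i) (hSint : (interior S).Nonempty)
    (K : Set (Fin n → ℂ)) (hK : IsCompact K)
    (hKpos : K ⊆ {z | ∀ i, (z i).im = 0 ∧ 0 < (z i).re}) :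
    IsCompact (hullS S K) ∧
    hullS S K ⊆ {z | ∀ i, (z i).im = 0 ∧ 0 < (z i).re} := by
  rcases K.eq_empty_or_nonempty with rfl | hne
  · rw [hullS_empty S hS0]; exact ⟨isCompact_empty, Set.empty_subset _⟩
  obtain ⟨s₀, hs₀⟩ := hSint
  have hs₀S : s₀ ∈ S := interior_subset hs₀
  rw [mem_interior_iff_mem_nhds, Metric.mem_nhds_iff] at hs₀
  obtain ⟨ε, hε, hball⟩ := hs₀
  obtain ⟨m, hm⟩ := exists_nat_gt (2/ε)
  have hm0 : (0:ℝ) < m := lt_trans (by positivity) hm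
  have hεm : 1 < ε * (m:ℝ) := by
    rw [div_lt_iff₀ hε] at hm
    nlinarith
  set β : Fin n → ℕ := fun i => ⌊(m:ℝ) * s₀ i⌋₊ with hβdef
  have hmem : ∀ γ : Fin n → ℕ, (∀ i, |(γ i : ℝ) - (m:ℝ) * s₀ i| ≤ 1) →
      ∃ s ∈ S, (fun i => (γ i:ℝ)) = (m:ℝ) • s := by
    intro γ hγ
    refine ⟨(m:ℝ)⁻¹ • (fun i => (γ i:ℝ)), hball ?_, ?_⟩
    · rw [Metric.mem_ball, dist_pi_lt_iff hε]
      intro i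
      rw [Real.dist_eq]
      have he : ((m:ℝ)⁻¹ • (fun i => (γ i:ℝ))) i - s₀ i = ((γ i:ℝ) - m * s₀ i) / m := by
        simp only [Pi.smul_apply, smul_eq_mul]
        field_simp
      rw [he, abs_div, abs_of_pos hm0]
      rw [div_lt_iff₀ hm0]
      calc |(γ i:ℝ) - m * s₀ i| ≤ 1 := hγ i
        _ < ε * m := hεm
    · funext i
      simp only [Pi.smul_apply, smul_eq_mul]
      field_simp
  have hβ1 : ∀ i, |(β i:ℝ) - (m:ℝ) * s₀ i| ≤ 1 := by
    intro i
    have h1 : (0:ℝ) ≤ (m:ℝ) * s₀ i := mul_nonneg hm0.le (hSpos s₀ hs₀S i)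
    have h2 := Nat.floor_le h1
    have h3 := Nat.lt_floor_add_one ((m:ℝ) * s₀ i)
    rw [abs_le]
    constructor <;> simp only [hβdef] <;> push_cast <;> linarith
  have hβe : ∀ i j, |((β j + if j = i then 1 else 0 : ℕ) : ℝ) - (m:ℝ) * s₀ j| ≤ 1 := by
    intro i j
    by_cases hji : j = i
    · subst hji
      have h1 : (0:ℝ) ≤ (m:ℝ) * s₀ j := mul_nonneg hm0.le (hSpos s₀ hs₀S j)
      have h2 := Nat.floor_le h1
      have h3 := Nat.lt_floor_add_one ((m:ℝ) * s₀ j)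
      simp only [if_pos rfl]
      rw [abs_le]
      constructor <;> simp only [hβdef] <;> push_cast <;> linarith
    · simpa only [hji, if_false, Nat.add_zero] using hβ1 j
  obtain ⟨u, v, hu, huv, hval⟩ := key_lemma hS0 hK hne hKpos m β (hmem β hβ1)
  choose uI vI huI huvI hvalI using fun i : Fin n =>
    key_lemma hS0 hK hne hKpos m (fun j => β j + if j = i then 1 else 0) (hmem _ (hβe i))
  have hzi : ∀ z ∈ hullS S K, ∀ i, (z i).im = 0 ∧ 0 < (z i).re ∧ (z i).re ≤ vI i / u := by
    intro z hz i
    obtain ⟨hA0, hAu, hAv⟩ := hval z hz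
    obtain ⟨hB0, hBu, hBv⟩ := hvalI i z hz
    set A := ∏ j, z j ^ β j with hAdef
    set B := ∏ j, z j ^ (β j + if j = i then 1 else 0) with hBdef
    have hAB : B = A * z i := by
      calc B = ∏ j, z j ^ β j * z j ^ (if j = i then 1 else 0) := by
            refine Finset.prod_congr rfl fun j _ => ?_
            rw [← pow_add]
        _ = A * ∏ j, z j ^ (if j = i then 1 else 0) := Finset.prod_mul_distrib
        _ = A * z i := by
            congr 1
            have he : ∀ j, z j ^ (if j = i then 1 else 0) = if j = i then z j else 1 :=
              fun j => by split <;> simp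
            simp_rw [he]
            simp
    have hApos : (0:ℝ) < A.re := lt_of_lt_of_le hu hAu
    have hBpos : (0:ℝ) < B.re := lt_of_lt_of_le (huI i) hBu
    have hA : A = ((A.re:ℝ):ℂ) := by apply Complex.ext <;> simp [hA0]
    have hB : B = ((B.re:ℝ):ℂ) := by apply Complex.ext <;> simp [hB0]
    have hz_eq : z i = ((B.re / A.re : ℝ):ℂ) := by
      have h2 : ((A.re:ℝ):ℂ) * z i = ((B.re:ℝ):ℂ) := by rw [← hA, ← hB, hAB]
      have hAne : ((A.re:ℝ):ℂ) ≠ 0 := by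
        simpa using hApos.ne'
      field_simp
      rw [mul_comm] at h2
      rw [Complex.ofReal_div, eq_div_iff hAne]; exact h2
    refine ⟨by rw [hz_eq]; simp, ?_, ?_⟩
    · rw [hz_eq]
      simpa using div_pos hBpos hApos
    · rw [hz_eq]
      simp only [Complex.ofReal_re]
      exact div_le_div₀ (le_trans (le_trans (huI i).le hBu) hBv) hBv hu hAu
  refine ⟨?_, fun z hz i => ⟨(hzi z hz i).1, (hzi z hz i).2.1⟩⟩
  set R : ℝ := ∑ i, vI i / u with hRdef
  have hRsub : hullS S K ⊆ Metric.closedBall 0 R := by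
    intro z hz
    rw [Metric.mem_closedBall, dist_zero_right]
    have hR0 : 0 ≤ R := Finset.sum_nonneg fun i _ =>
      (div_pos (lt_of_lt_of_le (huI i) (huvI i)) hu).le
    rw [pi_norm_le_iff_of_nonneg hR0]
    intro i
    obtain ⟨h1, h2, h3⟩ := hzi z hz i
    have hn : ‖z i‖ = |(z i).re| := by
      have : z i = (((z i).re:ℝ):ℂ) := by apply Complex.ext <;> simp [h1]
      rw [this]
      simp [Complex.norm_real]
    rw [hn, abs_of_pos h2]
    calc (z i).re ≤ vI i / u := h3
      _ ≤ R := Finset.single_le_sum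
          (fun j _ => (div_pos (lt_of_lt_of_le (huI j) (huvI j)) hu).le) (Finset.mem_univ i)
  exact (isCompact_closedBall (0:Fin n → ℂ) R).of_isClosed_subset (hullS_isClosed S K) hRsub
end
end

section
/- Let A ⊂ ℝⁿ be bounded and nonempty, S ⊂ ℝⁿ compact convex with 0 ∈ S. Let χ_A be the indicator function of A (0 on A, +∞ off A) and φ_S(ξ) = sup_{s∈S}⟨s,ξ⟩. If v : ℝⁿ → ℝ is convex, v ≤ 0 on A, and v ≤ φ_S + c for some constant c, then v(ξ) ≤ sup_{s ∈ S} (⟨s, ξ⟩ − φ_A(s)) for all ξ ∈ ℝⁿ, where φ_A(s) = sup_{a∈A} ⟨a,s⟩. -/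
open scoped BigOperators

noncomputable section

/-- The Euclidean dot product on Fin n → ℝ. -/
def dotp {n : ℕ} (x y : Fin n → ℝ) : ℝ := ∑ i, x i * y i

lemma dotp_comm {n : ℕ} (x y : Fin n → ℝ) : dotp x y = dotp y x := by
  simp [dotp, mul_comm]

lemma dotp_smul_right {n : ℕ} (T : ℝ) (x y : Fin n → ℝ) :
    dotp x (T • y) = T * dotp x y := by
  simp [dotp, Finset.mul_sum, mul_left_comm]

lemma dotp_continuous_left {n : ℕ} (y : Fin n → ℝ) :
    Continuous fun x => dotp x y := by
  unfold dotp
  exact continuous_finset_sum _ fun i _ => (continuous_apply i).mul continuous_const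

lemma dotp_continuous_right {n : ℕ} (x : Fin n → ℝ) :
    Continuous fun y => dotp x y := by
  unfold dotp
  exact continuous_finset_sum _ fun i _ => continuous_const.mul (continuous_apply i)

lemma dotp_le_norm {n : ℕ} (x y : Fin n → ℝ) : dotp x y ≤ ‖x‖ * ∑ i, |y i| := by
  rw [Finset.mul_sum]
  refine Finset.sum_le_sum fun i _ => ?_
  calc x i * y i ≤ |x i * y i| := le_abs_self _
    _ = |x i| * |y i| := abs_mul _ _
    _ ≤ ‖x‖ * |y i| := by
        have : |x i| ≤ ‖x‖ := by
          simpa [Real.norm_eq_abs] using norm_le_pi_norm x i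
        exact mul_le_mul_of_nonneg_right this (abs_nonneg _)

lemma exists_dotp_rep {n : ℕ} (f : (Fin n → ℝ) →L[ℝ] ℝ) :
    ∃ w : Fin n → ℝ, ∀ x, f x = dotp w x := by
  classical
  refine ⟨fun i => f (fun j => if i = j then 1 else 0), fun x => ?_⟩
  conv_lhs => rw [pi_eq_sum_univ x]
  rw [map_sum]
  unfold dotp
  refine Finset.sum_congr rfl fun i _ => ?_
  rw [map_smul]
  simp [mul_comm]

/-- If v is convex, v ≤ 0 on a nonempty bounded A, and
    v ≤ φ_S + c, then v(ξ) ≤ sup_{s∈S} (⟨s,ξ⟩ − φ_A(s)) for all ξ. -/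
theorem convex_le_LF_bound (n : ℕ) (A S : Set (Fin n → ℝ))
    (hAne : A.Nonempty) (hAb : Bornology.IsBounded A)
    (hScomp : IsCompact S) (hSconv : Convex ℝ S) (hS0 : (0 : Fin n → ℝ) ∈ S)
    (v : (Fin n → ℝ) → ℝ) (hconv : ConvexOn ℝ Set.univ v)
    (hvA : ∀ a ∈ A, v a ≤ 0)
    (c : ℝ) (hvS : ∀ ξ, v ξ ≤ sSup ((fun s => dotp s ξ) '' S) + c) :
    ∀ ξ, v ξ ≤ sSup ((fun s => dotp s ξ - sSup ((fun a => dotp a s) '' A)) '' S) := by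
  classical
  -- notation
  set φS : (Fin n → ℝ) → ℝ := fun y => sSup ((fun s => dotp s y) '' S) with hφS
  set φA : (Fin n → ℝ) → ℝ := fun s => sSup ((fun a => dotp a s) '' A) with hφA
  obtain ⟨R, hR⟩ := isBounded_iff_forall_norm_le.mp hAb
  obtain ⟨a₀, ha₀⟩ := hAne
  have hR0 : 0 ≤ R := le_trans (norm_nonneg a₀) (hR a₀ ha₀)
  -- bddAbove for φA
  have hφAbdd : ∀ s : Fin n → ℝ, BddAbove ((fun a => dotp a s) '' A) := by
    intro s
    refine ⟨R * ∑ i, |s i|, ?_⟩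
    rintro z ⟨a, ha, rfl⟩
    calc dotp a s ≤ ‖a‖ * ∑ i, |s i| := dotp_le_norm a s
      _ ≤ R * ∑ i, |s i| := by
          refine mul_le_mul_of_nonneg_right (hR a ha) ?_
          positivity
  -- bddAbove for φS images
  have hφSbdd : ∀ y : Fin n → ℝ, BddAbove ((fun s => dotp s y) '' S) :=
    fun y => (hScomp.image (dotp_continuous_left y)).bddAbove
  have hφSnonneg : ∀ y, 0 ≤ φS y := by
    intro y
    have : dotp (0 : Fin n → ℝ) y = 0 := by simp [dotp]
    have h0 := le_csSup (hφSbdd y) ⟨0, hS0, this⟩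
    simpa [hφS, this] using h0
  have hφSle : ∀ y u, 0 ≤ u → (∀ s ∈ S, dotp s y ≤ u) → φS y ≤ u := by
    intro y u hu h
    refine Real.sSup_le ?_ hu
    rintro z ⟨s, hs, rfl⟩
    exact h s hs
  intro ξ
  -- v is continuous
  have hvcont : Continuous v := continuousOn_univ.mp (hconv.continuousOn isOpen_univ)
  -- separate (ξ, v ξ) from the strict epigraph
  set Epi : Set ((Fin n → ℝ) × ℝ) := {p | v p.1 < p.2} with hEpi
  have hEopen : IsOpen Epi := isOpen_lt (hvcont.comp continuous_fst) continuous_snd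
  have hEconv : Convex ℝ Epi := by
    rintro p hp q hq a b ha hb hab
    simp only [hEpi, Set.mem_setOf_eq] at hp hq ⊢
    have h1 : v (a • p + b • q).1 ≤ a * v p.1 + b * v q.1 := by
      have := hconv.2 (Set.mem_univ p.1) (Set.mem_univ q.1) ha hb hab
      simpa [smul_eq_mul] using this
    have h2 : a * v p.1 + b * v q.1 < a * p.2 + b * q.2 := by
      rcases eq_or_lt_of_le ha with rfl | ha'
      · have hb1 : b = 1 := by linarith
        simpa [hb1] using hq
      · have : a * v p.1 < a * p.2 := by nlinarith
        have : b * v q.1 ≤ b * q.2 := by nlinarith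
        nlinarith
    have : (a • p + b • q).2 = a * p.2 + b * q.2 := by simp [smul_eq_mul]
    rw [this] at *
    exact lt_of_le_of_lt h1 h2
  have hnotmem : ((ξ, v ξ) : (Fin n → ℝ) × ℝ) ∉ Epi := by
    simp [hEpi]
  obtain ⟨f, hf⟩ := geometric_hahn_banach_open_point hEconv hEopen hnotmem
  -- decompose f
  set β : ℝ := f ((0 : Fin n → ℝ), (1 : ℝ)) with hβ
  have hsplit : ∀ (x : Fin n → ℝ) (t : ℝ), f (x, t) = f (x, 0) + t * β := by
    intro x t
    have : ((x, t) : (Fin n → ℝ) × ℝ) = (x, 0) + t • ((0 : Fin n → ℝ), (1 : ℝ)) := by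
      simp [Prod.ext_iff]
    rw [this, map_add, map_smul, smul_eq_mul, hβ]
  have hkey : ∀ (x : Fin n → ℝ) (t : ℝ), v x < t →
      f (x, 0) + t * β < f (ξ, 0) + v ξ * β := by
    intro x t ht
    have h1 := hf (x, t) ht
    have e1 := hsplit x t
    have e2 := hsplit ξ (v ξ)
    linarith
  -- β < 0
  have hβneg : β < 0 := by
    have := hkey ξ (v ξ + 1) (by linarith)
    nlinarith
  -- closed version of the separation
  have hclosed : ∀ x : Fin n → ℝ, f (x, 0) + v x * β ≤ f (ξ, 0) + v ξ * β := by
    intro x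
    by_contra h
    push_neg at h
    -- choose ε > 0 with ε * (-β) < gap
    set gap : ℝ := f (x, 0) + v x * β - (f (ξ, 0) + v ξ * β) with hgap
    have hgap0 : 0 < gap := by linarith
    set ε : ℝ := gap / (2 * (-β)) with hε
    have hε0 : 0 < ε := by
      apply div_pos hgap0; linarith
    have hk := hkey x (v x + ε) (by linarith)
    have hβne : β ≠ 0 := ne_of_lt hβneg
    have hεβ : ε * (-β) = gap / 2 := by
      rw [hε]
      field_simp [mul_comm]
    nlinarith
  -- dot product representation of x ↦ f (x, 0)
  obtain ⟨w, hw⟩ := exists_dotp_rep (f.comp (ContinuousLinearMap.inl ℝ (Fin n → ℝ) ℝ))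
  have hw' : ∀ x : Fin n → ℝ, f (x, 0) = dotp w x := by
    intro x
    simpa using hw x
  set b : ℝ := -β with hb
  have hb0 : 0 < b := by simp [hb]; linarith
  set s₀ : Fin n → ℝ := b⁻¹ • w with hs₀
  have hds₀ : ∀ x, dotp s₀ x = b⁻¹ * dotp w x := by
    intro x
    rw [dotp_comm, hs₀, dotp_smul_right, dotp_comm]
  -- subgradient inequality
  have hsub : ∀ x : Fin n → ℝ, v ξ + dotp s₀ x - dotp s₀ ξ ≤ v x := by
    intro x
    have h1 := hclosed x
    rw [hw' x, hw' ξ] at h1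
    rw [hds₀ x, hds₀ ξ]
    have hβb : β = -b := by rw [hb]; ring
    rw [hβb] at h1
    -- dotp w x - v x * b ≤ dotp w ξ - v ξ * b
    have h2 : dotp w x - v x * b ≤ dotp w ξ - v ξ * b := by linarith
    have hbinv : 0 < b⁻¹ := inv_pos.mpr hb0
    have h3 : b⁻¹ * (dotp w x - v x * b) ≤ b⁻¹ * (dotp w ξ - v ξ * b) :=
      mul_le_mul_of_nonneg_left h2 hbinv.le
    have hbne : b ≠ 0 := ne_of_gt hb0
    have e1 : b⁻¹ * (dotp w x - v x * b) = b⁻¹ * dotp w x - v x := by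
      field_simp [mul_comm]
    have e2 : b⁻¹ * (dotp w ξ - v ξ * b) = b⁻¹ * dotp w ξ - v ξ := by
      field_simp [mul_comm]
    linarith
  -- s₀ is dominated by the support function of S
  have hdom : ∀ y : Fin n → ℝ, dotp s₀ y ≤ φS y := by
    have hC : ∀ y : Fin n → ℝ, dotp s₀ y ≤ φS y + (c - v ξ + dotp s₀ ξ) := by
      intro y
      have h1 := hsub y
      have h2 : v y ≤ φS y + c := hvS y
      linarith
    intro y
    by_contra h
    push_neg at h
    set C : ℝ := c - v ξ + dotp s₀ ξ with hCdef
    set d : ℝ := dotp s₀ y - φS y with hd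
    have hd0 : 0 < d := by linarith
    set T : ℝ := (|C| + 1) / d with hT
    have hT0 : 0 < T := by positivity
    have h1 := hC (T • y)
    have h2 : dotp s₀ (T • y) = T * dotp s₀ y := dotp_smul_right T s₀ y
    have h3 : φS (T • y) ≤ T * φS y := by
      refine hφSle (T • y) (T * φS y) ?_ ?_
      · exact mul_nonneg hT0.le (hφSnonneg y)
      · intro s hs
        rw [dotp_smul_right]
        refine mul_le_mul_of_nonneg_left ?_ hT0.le
        exact le_csSup (hφSbdd y) ⟨s, hs, rfl⟩
    have hTd : T * d = |C| + 1 := by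
      rw [hT]; field_simp
    nlinarith [le_abs_self C]
  -- s₀ ∈ S
  have hs₀S : s₀ ∈ S := by
    by_contra hs₀n
    obtain ⟨g, u, hgS, hgs₀⟩ :=
      geometric_hahn_banach_closed_point hSconv hScomp.isClosed hs₀n
    obtain ⟨w', hw'rep⟩ := exists_dotp_rep g
    have hu0 : 0 < u := by
      have := hgS 0 hS0
      rwa [map_zero] at this
    have h1 : φS w' ≤ u := by
      refine hφSle w' u hu0.le ?_
      intro s hs
      rw [dotp_comm, ← hw'rep]
      exact (hgS s hs).le
    have h2 : dotp s₀ w' ≤ φS w' := hdom w'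
    have h3 : u < dotp s₀ w' := by
      rw [dotp_comm, ← hw'rep]; exact hgs₀
    linarith
  -- v ξ ≤ ⟨s₀, ξ⟩ - φA s₀
  have hmain : v ξ ≤ dotp s₀ ξ - φA s₀ := by
    have hAle : φA s₀ ≤ dotp s₀ ξ - v ξ := by
      refine csSup_le ⟨_, ⟨a₀, ha₀, rfl⟩⟩ ?_
      rintro z ⟨a, ha, rfl⟩
      have := hsub a
      have hva := hvA a ha
      show dotp a s₀ ≤ dotp s₀ ξ - v ξ
      rw [dotp_comm a s₀]
      linarith
    linarith
  -- conclude
  have hbddfin : BddAbove ((fun s => dotp s ξ - φA s) '' S) := by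
    obtain ⟨B, hB⟩ := (hScomp.image
      ((dotp_continuous_left ξ).sub (dotp_continuous_right a₀))).bddAbove
    refine ⟨B, ?_⟩
    rintro z ⟨s, hs, rfl⟩
    have h1 : dotp a₀ s ≤ φA s := le_csSup (hφAbdd s) ⟨a₀, ha₀, rfl⟩
    have h3 : dotp s ξ - dotp a₀ s ≤ B := hB ⟨s, hs, rfl⟩
    show dotp s ξ - φA s ≤ B
    linarith
  have := le_csSup hbddfin (⟨s₀, hs₀S, rfl⟩ :
    dotp s₀ ξ - φA s₀ ∈ (fun s => dotp s ξ - φA s) '' S)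
  calc v ξ ≤ dotp s₀ ξ - φA s₀ := hmain
    _ ≤ _ := this
end
end

section
/- Let f(z) = Σ_{α∈ℕⁿ} a_α z^α be a power series converging normally on a Reinhardt domain Ω ∋ 0 in ℂⁿ, and suppose there exist ξ ∈ ℝⁿ, a radius r ∈ (ℝ₊*)ⁿ, a constant C, and α₀ ∈ ℕⁿ with ⟨α₀, ξ⟩ > 0, such that |f| ≤ C on the polycircles C_t = {z : |z_j| = r_j e^{tξ_j}, j = 1,…,n} for all t ≥ 0 and C_t ⊂ Ω for all t ≥ 0. Then a_{α₀} = 0. -/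
open scoped BigOperators

noncomputable section

section Aux
open MeasureTheory Real Set

lemma int_exp (k : ℤ) : ∫ u in Set.Ioc (0:ℝ) (2*π), Complex.exp (k * u * Complex.I) =
    if k = 0 then (2*π:ℂ) else 0 := by
  rw [← intervalIntegral.integral_of_le (by positivity)]
  by_cases hk : k = 0
  · simp [hk, Complex.ofReal_mul]
  · simp only [hk, if_false]
    have : ∀ u : ℝ, (k:ℂ) * u * Complex.I = (k * Complex.I) * u := by intro u; ring
    simp_rw [this]
    rw [integral_exp_mul_complex (by simp [hk, Complex.I_ne_zero])]
    have h1 : Complex.exp ((k:ℂ) * Complex.I * (((2*π:ℝ)):ℂ)) = 1 := by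
      rw [show ((k:ℂ) * Complex.I) * ((2*π:ℝ):ℂ) = (k:ℂ) * (2*π*Complex.I) by push_cast; ring]
      exact Complex.exp_int_mul_two_pi_mul_I k
    rw [h1]; simp

-- single-factor integral
lemma int_h (ρ : ℝ) (hρ : 0 < ρ) (k m : ℕ) :
    ∫ u in Set.Ioc (0:ℝ) (2*π),
      ((ρ:ℂ) * Complex.exp (u * Complex.I))^k * Complex.exp (-(m:ℂ) * u * Complex.I)
      = (ρ:ℂ)^k * (if k = m then (2*π:ℂ) else 0) := by
  have : ∀ u : ℝ, ((ρ:ℂ) * Complex.exp (u * Complex.I))^k * Complex.exp (-(m:ℂ) * u * Complex.I)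
      = (ρ:ℂ)^k * Complex.exp ((((k:ℤ) - (m:ℤ)):ℂ) * u * Complex.I) := by
    intro u
    rw [mul_pow, ← Complex.exp_nat_mul, mul_assoc, ← Complex.exp_add]
    push_cast
    ring_nf
  simp_rw [this]
  rw [integral_const_mul]
  have := int_exp ((k:ℤ) - (m:ℤ))
  push_cast at this ⊢
  rw [this]
  congr 1
  simp [sub_eq_zero, Nat.cast_inj]


lemma norm_exp_I2 (m : ℕ) (x : ℝ) : ‖Complex.exp (-(m:ℂ) * x * Complex.I)‖ = 1 := by
  rw [show -(m:ℂ)*x*Complex.I = (((-(m:ℝ)*x):ℝ):ℂ)*Complex.I by push_cast; ring,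
    Complex.norm_exp_ofReal_mul_I]

lemma norm_exp_I1 (x : ℝ) : ‖Complex.exp ((x:ℂ) * Complex.I)‖ = 1 := by
  rw [Complex.norm_exp_ofReal_mul_I]

lemma key (n : ℕ) (a : (Fin n → ℕ) → ℂ) (ρ : Fin n → ℝ) (hρ : ∀ i, 0 < ρ i)
    (α₀ : Fin n → ℕ) (C : ℝ)
    (hsm : Summable (fun α : Fin n → ℕ => ‖a α‖ * ∏ i, ρ i ^ α i))
    (hbd : ∀ z : Fin n → ℂ, (∀ i, ‖z i‖ = ρ i) →
      ∃ F : ℂ, HasSum (fun α : Fin n → ℕ => a α * ∏ i, z i ^ α i) F ∧ ‖F‖ ≤ C) :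
    ‖a α₀‖ * ∏ i, ρ i ^ α₀ i ≤ C := by
  classical
  set cube : Set (Fin n → ℝ) := Set.univ.pi (fun _ => Set.Ioc (0:ℝ) (2*π)) with hcube
  have hcubemeas : MeasurableSet cube := MeasurableSet.univ_pi (fun _ => measurableSet_Ioc)
  have hvol : volume cube = (ENNReal.ofReal (2*π))^n := by
    rw [hcube, volume_pi_pi]
    simp [Real.volume_Ioc]
  have hvolfin : volume cube < ⊤ := by rw [hvol]; exact ENNReal.pow_lt_top ENNReal.ofReal_lt_top
  -- the single-variable factor
  set h : (Fin n → ℕ) → Fin n → ℝ → ℂ := fun α i =>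
    Set.indicator (Set.Ioc (0:ℝ) (2*π))
      (fun u => ((ρ i:ℂ) * Complex.exp (u * Complex.I))^(α i) *
        Complex.exp (-(α₀ i:ℂ) * u * Complex.I)) with hh
  set F : (Fin n → ℕ) → (Fin n → ℝ) → ℂ := fun α θ => a α * ∏ i, h α i (θ i) with hF
  -- norms of factors
  have hnorm : ∀ α i (u : ℝ), u ∈ Set.Ioc (0:ℝ) (2*π) → ‖h α i u‖ = ρ i ^ α i := by
    intro α i u hu
    rw [hh]
    simp only [Set.indicator_of_mem hu]
    rw [norm_mul, norm_pow, norm_mul, norm_exp_I1, norm_exp_I2,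
      Complex.norm_real, Real.norm_eq_abs, abs_of_pos (hρ i)]
    ring
  have hzero : ∀ α (θ : Fin n → ℝ), θ ∉ cube → F α θ = 0 := by
    intro α θ hθ
    have hθ' : ¬ ∀ i, θ i ∈ Set.Ioc (0:ℝ) (2*π) := by
      simpa [hcube, Set.mem_pi] using hθ
    push_neg at hθ'
    obtain ⟨i, hi⟩ := hθ'
    rw [hF]
    simp only
    rw [Finset.prod_eq_zero (Finset.mem_univ i), mul_zero]
    rw [hh]; exact Set.indicator_of_notMem hi _
  -- measurability
  have hmeas : ∀ α, AEStronglyMeasurable (F α) volume := by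
    intro α
    apply Measurable.aestronglyMeasurable
    apply Measurable.const_mul
    apply Finset.measurable_prod
    intro i _
    have : Measurable (h α i) := by
      apply Measurable.indicator _ measurableSet_Ioc
      fun_prop
    exact this.comp (measurable_pi_apply i)
  -- norm bound pointwise
  have hFle : ∀ α θ, ‖F α θ‖ ≤ cube.indicator (fun _ => ‖a α‖ * ∏ i, ρ i ^ α i) θ := by
    intro α θ
    by_cases hθ : θ ∈ cube
    · rw [Set.indicator_of_mem hθ, hF]
      simp only [norm_mul]
      apply le_of_eq
      congr 1
      rw [norm_prod]
      apply Finset.prod_congr rfl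
      intro i _
      exact hnorm α i (θ i) (by rw [hcube] at hθ; exact hθ i (Set.mem_univ i))
    · rw [Set.indicator_of_notMem hθ, hzero α θ hθ, norm_zero]
  -- lintegral bound
  have hlint : ∀ α, ∫⁻ θ, ‖F α θ‖₊ ∂volume ≤
      ENNReal.ofReal (‖a α‖ * ∏ i, ρ i ^ α i) * volume cube := by
    intro α
    have : ∀ θ, (‖F α θ‖₊ : ENNReal) ≤
        cube.indicator (fun _ => ENNReal.ofReal (‖a α‖ * ∏ i, ρ i ^ α i)) θ := by
      intro θ
      by_cases hθ : θ ∈ cube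
      · rw [Set.indicator_of_mem hθ]
        rw [← ENNReal.ofReal_coe_nnreal, coe_nnnorm]
        exact ENNReal.ofReal_le_ofReal (by simpa [Set.indicator_of_mem hθ] using hFle α θ)
      · rw [Set.indicator_of_notMem hθ, hzero α θ hθ]; simp
    calc ∫⁻ θ, ‖F α θ‖₊ ∂volume ≤ ∫⁻ θ, cube.indicator
          (fun _ => ENNReal.ofReal (‖a α‖ * ∏ i, ρ i ^ α i)) θ ∂volume := lintegral_mono this
      _ = ENNReal.ofReal (‖a α‖ * ∏ i, ρ i ^ α i) * volume cube := by
          rw [lintegral_indicator hcubemeas, setLIntegral_const]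
  have hlsum : (∑' α, ∫⁻ θ, ‖F α θ‖₊ ∂volume) ≠ ⊤ := by
    apply ne_top_of_le_ne_top _ (ENNReal.tsum_le_tsum hlint)
    rw [ENNReal.tsum_mul_right]
    apply ENNReal.mul_ne_top _ hvolfin.ne
    rw [← ENNReal.ofReal_tsum_of_nonneg (fun α => mul_nonneg (norm_nonneg _) (Finset.prod_nonneg (fun i _ => pow_nonneg (hρ i).le _))) hsm]
    exact ENNReal.ofReal_ne_top
  -- interchange
  have hinter := integral_tsum hmeas hlsum
  -- compute each integral
  have hint : ∀ α, ∫ θ, F α θ = a α * ((∏ i, (ρ i:ℂ) ^ α i) *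
      (if α = α₀ then (2*π:ℂ)^n else 0)) := by
    intro α
    rw [hF]
    simp only
    rw [integral_const_mul]
    congr 1
    rw [MeasureTheory.integral_fintype_prod_volume_eq_prod (ι := Fin n) (fun i u => h α i u)]
    have : ∀ i, ∫ u, h α i u = (ρ i:ℂ)^(α i) * (if α i = α₀ i then (2*π:ℂ) else 0) := by
      intro i
      rw [hh]
      simp only
      rw [integral_indicator measurableSet_Ioc]
      exact int_h (ρ i) (hρ i) (α i) (α₀ i)
    simp_rw [this]
    rw [Finset.prod_mul_distrib]
    congr 1
    by_cases hα : α = α₀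
    · subst hα; simp
    · rw [if_neg hα]
      obtain ⟨i, hi⟩ : ∃ i, α i ≠ α₀ i := by
        by_contra hc; push_neg at hc; exact hα (funext hc)
      exact Finset.prod_eq_zero (Finset.mem_univ i) (by rw [if_neg hi])
  -- RHS value
  have hrhs : (∑' α, ∫ θ, F α θ) = a α₀ * ((∏ i, (ρ i:ℂ) ^ α₀ i) * (2*π:ℂ)^n) := by
    simp_rw [hint]
    rw [tsum_eq_single α₀]
    · simp
    · intro α hα; simp [hα]
  -- LHS bound: the pointwise sum
  have hC0 : 0 ≤ C := by
    obtain ⟨F0, _, hF0⟩ := hbd (fun i => (ρ i : ℂ)) (fun i => by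
      simp [abs_of_pos (hρ i)])
    exact le_trans (norm_nonneg _) hF0
  have hGle : ∀ θ, ‖∑' α, F α θ‖ ≤ cube.indicator (fun _ => C) θ := by
    intro θ
    by_cases hθ : θ ∈ cube
    · rw [Set.indicator_of_mem hθ]
      set z : Fin n → ℂ := fun i => (ρ i:ℂ) * Complex.exp (θ i * Complex.I) with hz
      obtain ⟨F0, hF0sum, hF0⟩ := hbd z (fun i => by
        rw [hz]
        simp only [norm_mul, norm_exp_I1]
        rw [Complex.norm_real, Real.norm_eq_abs, abs_of_pos (hρ i), mul_one])
      have hw : ∀ α, F α θ = (a α * ∏ i, z i ^ α i) * ∏ i, Complex.exp (-(α₀ i:ℂ) * θ i * Complex.I) := by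
        intro α
        rw [hF, hz]
        simp only
        rw [mul_assoc, ← Finset.prod_mul_distrib]
        congr 1
        apply Finset.prod_congr rfl
        intro i _
        have hmem : θ i ∈ Set.Ioc (0:ℝ) (2*π) := by rw [hcube] at hθ; exact hθ i (Set.mem_univ i)
        rw [hh]
        simp only [Set.indicator_of_mem hmem]
      simp_rw [hw]
      rw [tsum_mul_right, (hF0sum.tsum_eq)]
      rw [norm_mul, norm_prod]
      simp_rw [fun i => norm_exp_I2 (α₀ i) (θ i)]
      simpa using hF0
    · rw [Set.indicator_of_notMem hθ]
      have : ∀ α, F α θ = 0 := fun α => hzero α θ hθ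
      simp [this]
  have hGint : ‖∫ θ, (∑' α, F α θ)‖ ≤ C * (2*π)^n := by
    calc ‖∫ θ, (∑' α, F α θ)‖ ≤ ∫ θ, ‖∑' α, F α θ‖ := norm_integral_le_integral_norm _
      _ ≤ ∫ θ, cube.indicator (fun _ => C) θ := by
          apply integral_mono_of_nonneg
          · exact Filter.Eventually.of_forall (fun θ => norm_nonneg _)
          · exact (integrable_indicator_iff hcubemeas).mpr
              (integrableOn_const hvolfin.ne)
          · exact Filter.Eventually.of_forall hGle
      _ = C * (2*π)^n := by
          rw [integral_indicator_const _ hcubemeas, measureReal_def, hvol]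
          rw [ENNReal.toReal_pow, ENNReal.toReal_ofReal (by positivity)]
          simp [mul_comm]
  -- combine
  have hnorms : ∀ i, ‖((ρ i:ℝ):ℂ) ^ α₀ i‖ = ρ i ^ α₀ i := fun i => by
    rw [norm_pow, Complex.norm_real, Real.norm_eq_abs, abs_of_pos (hρ i)]
  rw [hinter, hrhs, norm_mul, norm_mul, norm_prod, norm_pow] at hGint
  simp_rw [hnorms] at hGint
  have h2π : ‖(2*(π:ℂ))‖ = 2*π := by
    rw [show (2:ℂ)*(π:ℂ) = ((2*π:ℝ):ℂ) by push_cast; ring, Complex.norm_real,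
      Real.norm_eq_abs, abs_of_pos (by positivity)]
  rw [h2π, ← mul_assoc] at hGint
  have hpow : (0:ℝ) < (2*π)^n := by positivity
  exact le_of_mul_le_mul_right hGint hpow

end Aux

open MeasureTheory Real Set in
/-- If a power series converging on a Reinhardt domain Ω ∋ 0 has
    its sum bounded by C on the polycircles C_t of polyradius (rⱼ e^{tξⱼ}) for
    all t ≥ 0, and ⟨α₀,ξ⟩ > 0, then the coefficient a_{α₀} vanishes. -/
theorem coeff_vanishes_of_bounded_on_polycircles (n : ℕ)
    (Ω : Set (Fin n → ℂ)) (hΩopen : IsOpen Ω) (hΩconn : IsConnected Ω)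
    (hΩ0 : (0 : Fin n → ℂ) ∈ Ω)
    (hΩrein : ∀ z ∈ Ω, ∀ ζ : Fin n → ℂ, (∀ i, ‖ζ i‖ = 1) →
      (fun i => ζ i * z i) ∈ Ω)
    (a : (Fin n → ℕ) → ℂ) (f : (Fin n → ℂ) → ℂ)
    (hsum : ∀ z ∈ Ω, HasSum (fun α : Fin n → ℕ => a α * ∏ i, z i ^ α i) (f z))
    (ξ : Fin n → ℝ) (r : Fin n → ℝ) (hr : ∀ i, 0 < r i) (C : ℝ)
    (α₀ : Fin n → ℕ) (hα₀ : 0 < ∑ i, (α₀ i : ℝ) * ξ i)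
    (hcirc : ∀ t : ℝ, 0 ≤ t →
      ∀ z : Fin n → ℂ, (∀ i, ‖z i‖ = r i * Real.exp (t * ξ i)) →
        z ∈ Ω ∧ ‖f z‖ ≤ C) :
    a α₀ = 0 := by
  set s : ℝ := ∑ i, (α₀ i : ℝ) * ξ i with hs
  -- main bound
  have hbound : ∀ t : ℝ, 0 ≤ t →
      (‖a α₀‖ * ∏ i, r i ^ α₀ i) * Real.exp (t * s) ≤ C := by
    intro t ht
    set ρ : Fin n → ℝ := fun i => r i * Real.exp (t * ξ i) with hρdef
    have hρ : ∀ i, 0 < ρ i := fun i => mul_pos (hr i) (Real.exp_pos _)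
    have hnz : ∀ (z : Fin n → ℂ), (∀ i, ‖z i‖ = ρ i) → z ∈ Ω ∧ ‖f z‖ ≤ C :=
      fun z hz => hcirc t ht z hz
    have hsm : Summable (fun α : Fin n → ℕ => ‖a α‖ * ∏ i, ρ i ^ α i) := by
      have hz0 : ∀ i, ‖((ρ i : ℝ) : ℂ)‖ = ρ i := fun i => by
        rw [Complex.norm_real, Real.norm_eq_abs, abs_of_pos (hρ i)]
      have hmem := (hnz (fun i => ((ρ i : ℝ) : ℂ)) hz0).1
      have hS := (hsum _ hmem).summable
      have := summable_norm_iff.mpr hS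
      have heq : (fun α : Fin n → ℕ => ‖a α * ∏ i, ((ρ i:ℝ):ℂ) ^ α i‖)
          = fun α => ‖a α‖ * ∏ i, ρ i ^ α i := by
        funext α
        rw [norm_mul, norm_prod]
        congr 1
        exact Finset.prod_congr rfl (fun i _ => by
          rw [norm_pow, Complex.norm_real, Real.norm_eq_abs, abs_of_pos (hρ i)])
      rwa [heq] at this
    have hk := key n a ρ hρ α₀ C hsm (fun z hz =>
      ⟨f z, hsum z ((hnz z hz).1), (hnz z hz).2⟩)
    have hprod : ∏ i, ρ i ^ α₀ i = (∏ i, r i ^ α₀ i) * Real.exp (t * s) := by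
      rw [hρdef]
      simp only [mul_pow]
      rw [Finset.prod_mul_distrib]
      congr 1
      simp_rw [← Real.exp_nat_mul, ← Real.exp_sum]
      congr 1
      rw [hs, Finset.mul_sum]
      apply Finset.sum_congr rfl
      intro i _
      ring
    rw [hprod, ← mul_assoc] at hk
    exact hk
  -- conclude
  by_contra ha
  have hK : 0 < ‖a α₀‖ * ∏ i, r i ^ α₀ i :=
    mul_pos (norm_pos_iff.mpr ha) (Finset.prod_pos (fun i _ => pow_pos (hr i) _))
  set K := ‖a α₀‖ * ∏ i, r i ^ α₀ i with hKdef
  have h1 : Filter.Tendsto (fun t : ℝ => t * s) Filter.atTop Filter.atTop :=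
    Filter.Tendsto.atTop_mul_const hα₀ Filter.tendsto_id
  have h2 := Real.tendsto_exp_atTop.comp h1
  obtain ⟨t, ht⟩ := ((h2.eventually (Filter.eventually_gt_atTop (C/K))).and
    (Filter.eventually_ge_atTop 0)).exists
  have hb := hbound t ht.2
  have : Real.exp (t * s) ≤ C / K := by
    rw [le_div_iff₀ hK]
    linarith [hb]
  exact absurd this (not_le.mpr ht.1)
end
end

section
/- Let K ⊂ ℂⁿ be a nonempty compact Reinhardt set, S ⊂ ℝ₊ⁿ compact convex with 0 ∈ S, A = Log(K ∩ (ℂ*)ⁿ) nonempty, Γ = ℝ₊S, and assume K = closure(K ∩ (ℂ*)ⁿ). Then the S-hull satisfies K̂^S ∩ (ℂ*)ⁿ = Log^{−1}(Â_Γ), where Â_Γ = {x ∈ ℝⁿ : ⟨x,ξ⟩ ≤ φ_A(ξ) ∀ ξ ∈ Γ} = ch(A) − Γ°. -/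
open scoped BigOperators Topology
open Filter

noncomputable section

/-- Logarithmic coordinates Log z = (log|z₁|,…,log|zₙ|). -/
def LogC {n : ℕ} (z : Fin n → ℂ) : Fin n → ℝ := fun i => Real.log ‖z i‖

lemma norm_monomial {n : ℕ} (z : Fin n → ℂ) (hz : ∀ i, z i ≠ 0) (β : Fin n → ℕ) :
    ‖∏ i, z i ^ β i‖ = Real.exp (dotp (LogC z) (fun i => (β i : ℝ))) := by
  rw [dotp, Real.exp_sum, norm_prod]
  refine Finset.prod_congr rfl fun i _ => ?_
  rw [norm_pow, LogC]
  rw [mul_comm, Real.exp_nat_mul, Real.exp_log (norm_pos_iff.2 (hz i))]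

lemma geom_ortho (N d₁ d₂ : ℕ) (hN : 0 < N) (h₁ : d₁ < N) (h₂ : d₂ < N) :
    ∑ j ∈ Finset.range N,
      (Complex.exp (2 * Real.pi * Complex.I / N)) ^ (j * d₁) *
        ((Complex.exp (2 * Real.pi * Complex.I / N))⁻¹) ^ (j * d₂) =
      if d₁ = d₂ then (N : ℂ) else 0 := by
  set ζ := Complex.exp (2 * Real.pi * Complex.I / N) with hζ
  have hprim : IsPrimitiveRoot ζ N := Complex.isPrimitiveRoot_exp N hN.ne'
  have hζ0 : ζ ≠ 0 := Complex.exp_ne_zero _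
  have hζN : ζ ^ N = 1 := hprim.pow_eq_one
  set x := ζ ^ d₁ * (ζ⁻¹) ^ d₂ with hx
  have hterm : ∀ j, ζ ^ (j * d₁) * (ζ⁻¹) ^ (j * d₂) = x ^ j := by
    intro j
    rw [hx, mul_pow, ← pow_mul, ← pow_mul, mul_comm d₁ j, mul_comm d₂ j]
  rw [Finset.sum_congr rfl fun j _ => hterm j]
  by_cases h : d₁ = d₂
  · subst h
    have : x = 1 := by
      rw [hx, ← mul_pow, mul_inv_cancel₀ hζ0, one_pow]
    simp [this]
  · have hxN : x ^ N = 1 := by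
      rw [hx, mul_pow, ← pow_mul, ← pow_mul, mul_comm d₁ N, mul_comm d₂ N,
        pow_mul, pow_mul, hζN, inv_pow, hζN, one_pow, inv_one, one_pow, mul_one]
    have hx1 : x ≠ 1 := by
      intro hx1
      apply h
      refine hprim.pow_inj h₁ h₂ ?_
      have : x * ζ ^ d₂ = ζ ^ d₂ := by rw [hx1, one_mul]
      rw [hx] at this
      rwa [mul_assoc, inv_pow, inv_mul_cancel₀ (pow_ne_zero _ hζ0), mul_one] at this
    rw [if_neg h, geom_sum_eq hx1, hxN, sub_self, zero_div]

lemma cauchy_estimate {n : ℕ} {K : Set (Fin n → ℂ)}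
    (hKrein : ∀ z ∈ K, ∀ ζ : Fin n → ℂ, (∀ i, ‖ζ i‖ = 1) → (fun i => ζ i * z i) ∈ K)
    (D : Finset (Fin n → ℕ)) (C : (Fin n → ℕ) → ℂ) (q : (Fin n → ℂ) → ℂ)
    (hq : ∀ z, q z = ∑ β ∈ D, C β * ∏ i, z i ^ β i)
    {M : ℝ} (hM : ∀ v ∈ K, ‖q v‖ ≤ M)
    {w : Fin n → ℂ} (hw : w ∈ K) {β₀ : Fin n → ℕ} (hβ₀ : β₀ ∈ D) :
    ‖C β₀‖ * ‖∏ i, w i ^ β₀ i‖ ≤ M := by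
  classical
  set N : ℕ := (D.sup fun β => Finset.univ.sup β) + 1 with hN
  have hNpos : 0 < N := Nat.succ_pos _
  have hlt : ∀ β ∈ D, ∀ i, β i < N := by
    intro β hβ i
    have h1 : β i ≤ Finset.univ.sup β := Finset.le_sup (Finset.mem_univ i)
    have h2 : Finset.univ.sup β ≤ D.sup fun β => Finset.univ.sup β := Finset.le_sup hβ
    omega
  set ζ := Complex.exp (2 * Real.pi * Complex.I / N) with hζdef
  have hprim : IsPrimitiveRoot ζ N := Complex.isPrimitiveRoot_exp N hNpos.ne'
  have hζ0 : ζ ≠ 0 := Complex.exp_ne_zero _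
  have hζ1 : ‖ζ‖ = 1 := Complex.norm_eq_one_of_pow_eq_one hprim.pow_eq_one hNpos.ne'
  have hζi1 : ‖ζ⁻¹‖ = 1 := by rw [norm_inv, hζ1, inv_one]
  set J : Finset (Fin n → ℕ) := Fintype.piFinset (fun _ : Fin n => Finset.range N) with hJ
  -- the key identity
  have key : ∑ j ∈ J, q (fun i => ζ ^ (j i) * w i) * ∏ i, (ζ⁻¹) ^ (j i * β₀ i)
      = (N : ℂ) ^ n * (C β₀ * ∏ i, w i ^ β₀ i) := by
    have step1 : ∀ j ∈ J, q (fun i => ζ ^ (j i) * w i) * ∏ i, (ζ⁻¹) ^ (j i * β₀ i)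
        = ∑ β ∈ D, (C β * ∏ i, w i ^ β i) * ∏ i, (ζ ^ (j i * β i) * (ζ⁻¹) ^ (j i * β₀ i)) := by
      intro j _
      rw [hq, Finset.sum_mul]
      refine Finset.sum_congr rfl fun β _ => ?_
      have : ∏ i, (ζ ^ (j i) * w i) ^ β i
          = (∏ i, ζ ^ (j i * β i)) * ∏ i, w i ^ β i := by
        rw [← Finset.prod_mul_distrib]
        exact Finset.prod_congr rfl fun i _ => by rw [mul_pow, pow_mul]
      rw [this, Finset.prod_mul_distrib]
      ring
    rw [Finset.sum_congr rfl step1, Finset.sum_comm]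
    have inner : ∀ β ∈ D, ∑ j ∈ J, ∏ i, (ζ ^ (j i * β i) * (ζ⁻¹) ^ (j i * β₀ i))
        = if β = β₀ then (N : ℂ) ^ n else 0 := by
      intro β hβ
      have := Finset.prod_univ_sum (fun _ : Fin n => Finset.range N)
        (fun i m => ζ ^ (m * β i) * (ζ⁻¹) ^ (m * β₀ i))
      rw [← this]
      have : ∀ i : Fin n, ∑ m ∈ Finset.range N, ζ ^ (m * β i) * (ζ⁻¹) ^ (m * β₀ i)
          = if β i = β₀ i then (N : ℂ) else 0 :=
        fun i => geom_ortho N (β i) (β₀ i) hNpos (hlt β hβ i) (hlt β₀ hβ₀ i)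
      rw [Finset.prod_congr rfl fun i _ => this i]
      by_cases h : β = β₀
      · subst h; simp
      · obtain ⟨i, hi⟩ := Function.ne_iff.1 h
        rw [if_neg h]
        exact Finset.prod_eq_zero (Finset.mem_univ i) (if_neg hi)
    rw [Finset.sum_congr rfl (fun β hβ => by rw [← Finset.mul_sum, inner β hβ])]
    rw [Finset.sum_eq_single β₀ (fun β _ hne => by rw [if_neg hne, mul_zero])
      (fun h => absurd hβ₀ h)]
    rw [if_pos rfl]; ring
  -- norm bound
  have hrot : ∀ j : Fin n → ℕ, (fun i => ζ ^ (j i) * w i) ∈ K := by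
    intro j
    exact hKrein w hw (fun i => ζ ^ (j i)) (fun i => by rw [norm_pow, hζ1, one_pow])
  have hMnn : 0 ≤ M := le_trans (norm_nonneg _) (hM w hw)
  have bound : ‖∑ j ∈ J, q (fun i => ζ ^ (j i) * w i) * ∏ i, (ζ⁻¹) ^ (j i * β₀ i)‖
      ≤ (J.card : ℝ) * M := by
    refine le_trans (norm_sum_le _ _) ?_
    have : ∀ j ∈ J, ‖q (fun i => ζ ^ (j i) * w i) * ∏ i, (ζ⁻¹) ^ (j i * β₀ i)‖ ≤ M := by
      intro j _
      rw [norm_mul]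
      have h1 : ‖∏ i, (ζ⁻¹) ^ (j i * β₀ i)‖ = 1 := by
        rw [norm_prod]
        refine Finset.prod_eq_one fun i _ => by rw [norm_pow, hζi1, one_pow]
      rw [h1, mul_one]
      exact hM _ (hrot j)
    calc ∑ j ∈ J, ‖q (fun i => ζ ^ (j i) * w i) * ∏ i, (ζ⁻¹) ^ (j i * β₀ i)‖
        ≤ ∑ _j ∈ J, M := Finset.sum_le_sum this
      _ = (J.card : ℝ) * M := by rw [Finset.sum_const, nsmul_eq_mul]
  have hJcard : (J.card : ℝ) = (N : ℝ) ^ n := by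
    rw [hJ, Fintype.card_piFinset]
    simp [Finset.card_range]
  rw [key] at bound
  rw [norm_mul, norm_mul, norm_pow, Complex.norm_natCast, hJcard] at bound
  have hNpow : (0:ℝ) < (N:ℝ) ^ n := by positivity
  calc ‖C β₀‖ * ‖∏ i, w i ^ β₀ i‖
      = ((N:ℝ)^n * (‖C β₀‖ * ‖∏ i, w i ^ β₀ i‖)) / ((N:ℝ)^n) := by field_simp
    _ ≤ ((N:ℝ)^n * M) / ((N:ℝ)^n) := by
        exact div_le_div_of_nonneg_right bound hNpow.le |>.trans_eq rfl
    _ = M := by field_simp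

lemma pow_expand {n : ℕ} (k : ℕ) (c : (Fin n → ℕ) →₀ ℂ) (z : Fin n → ℂ) :
    (∑ α ∈ c.support, c α * ∏ i, z i ^ α i) ^ k
      = ∑ β ∈ (Fintype.piFinset fun _ : Fin k => c.support).image
            (fun f => (fun i => ∑ t, f t i)),
          (∑ f ∈ (Fintype.piFinset fun _ : Fin k => c.support).filter
              (fun f => (fun i => ∑ t, f t i) = β), ∏ t, c (f t)) * ∏ i, z i ^ β i := by
  classical
  set T := Fintype.piFinset fun _ : Fin k => c.support with hT
  set σ : (Fin k → (Fin n → ℕ)) → (Fin n → ℕ) := fun f => (fun i => ∑ t, f t i) with hσ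
  have e1 : (∑ α ∈ c.support, c α * ∏ i, z i ^ α i) ^ k
      = ∑ f ∈ T, (∏ t, c (f t)) * ∏ i, z i ^ (σ f i) := by
    have : (∑ α ∈ c.support, c α * ∏ i, z i ^ α i) ^ k
        = ∏ _t : Fin k, ∑ α ∈ c.support, c α * ∏ i, z i ^ α i := by
      rw [Finset.prod_const, Finset.card_univ, Fintype.card_fin]
    rw [this, Finset.prod_univ_sum]
    refine Finset.sum_congr rfl fun f _ => ?_
    rw [Finset.prod_mul_distrib]
    congr 1
    rw [Finset.prod_comm]
    exact Finset.prod_congr rfl fun i _ => (Finset.prod_pow_eq_pow_sum _ _ _)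
  rw [e1, ← Finset.sum_fiberwise_of_maps_to (g := σ) (fun f hf => Finset.mem_image_of_mem σ hf)
    (fun f => (∏ t, c (f t)) * ∏ i, z i ^ (σ f i))]
  refine Finset.sum_congr rfl fun β _ => ?_
  rw [Finset.sum_mul]
  refine Finset.sum_congr rfl fun f hf => ?_
  have : σ f = β := (Finset.mem_filter.1 hf).2
  rw [this]

lemma growth_le {a M : ℝ} (n d : ℕ) (ha : 0 ≤ a) (hM : 0 ≤ M)
    (h : ∀ k : ℕ, 1 ≤ k → a ^ k ≤ ((k * d + 1 : ℕ) : ℝ) ^ n * M ^ k) : a ≤ M := by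
  by_contra hc
  push_neg at hc
  rcases eq_or_lt_of_le hM with hM0 | hMpos
  · have h1 := h 1 le_rfl
    rw [pow_one, pow_one, ← hM0, mul_zero] at h1
    exact absurd (lt_of_lt_of_le hc h1) (not_lt.2 hM)
  · set r := a / M with hr
    have hr1 : 1 < r := (one_lt_div hMpos).2 hc
    have hrk : ∀ k : ℕ, 1 ≤ k → r ^ k ≤ ((d + 1 : ℕ) : ℝ) ^ n * (k : ℝ) ^ n := by
      intro k hk
      have hMk : (0:ℝ) < M ^ k := pow_pos hMpos k
      have h2 : a ^ k / M ^ k ≤ ((k * d + 1 : ℕ) : ℝ) ^ n :=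
        (div_le_iff₀ hMk).2 (h k hk)
      have h3 : ((k * d + 1 : ℕ) : ℝ) ≤ ((d + 1 : ℕ) : ℝ) * (k : ℝ) := by
        push_cast
        have : (1:ℝ) ≤ (k:ℝ) := by exact_mod_cast hk
        nlinarith
      calc r ^ k = a ^ k / M ^ k := by rw [hr, div_pow]
        _ ≤ ((k * d + 1 : ℕ) : ℝ) ^ n := h2
        _ ≤ (((d + 1 : ℕ) : ℝ) * (k : ℝ)) ^ n := by
            exact pow_le_pow_left₀ (by positivity) h3 n
        _ = ((d + 1 : ℕ) : ℝ) ^ n * (k : ℝ) ^ n := mul_pow _ _ _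
    have htend := tendsto_pow_const_div_const_pow_of_one_lt n hr1
    have hev : ∀ᶠ k : ℕ in Filter.atTop, (k : ℝ) ^ n / r ^ k < (((d + 1 : ℕ) : ℝ) ^ n)⁻¹ :=
      htend.eventually (gt_mem_nhds (by positivity))
    obtain ⟨k, hklt, hk1⟩ := (hev.and (Filter.eventually_ge_atTop 1)).exists
    have hrk0 : (0:ℝ) < r ^ k := pow_pos (lt_trans one_pos hr1) k
    have hC : (0:ℝ) < ((d + 1 : ℕ) : ℝ) ^ n := by positivity
    have h4 : (k : ℝ) ^ n < r ^ k / ((d + 1 : ℕ) : ℝ) ^ n := by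
      rw [lt_div_iff₀ hC]
      have := (div_lt_iff₀ hrk0).1 hklt
      calc (k:ℝ) ^ n * ((d + 1 : ℕ) : ℝ) ^ n < (((d + 1 : ℕ) : ℝ) ^ n)⁻¹ * r ^ k * ((d + 1 : ℕ) : ℝ) ^ n := by
            exact mul_lt_mul_of_pos_right this hC
        _ = r ^ k := by field_simp
    have h5 := hrk k hk1
    have h6 : (k:ℝ) ^ n * ((d + 1 : ℕ) : ℝ) ^ n < r ^ k := (lt_div_iff₀ hC).1 h4
    nlinarith [h5, h6]

lemma dotp_smul_right_s17 {n : ℕ} (a : Fin n → ℝ) (t : ℝ) (s : Fin n → ℝ) :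
    dotp a (t • s) = t * dotp a s := by
  simp only [dotp, Pi.smul_apply, smul_eq_mul, Finset.mul_sum]
  exact Finset.sum_congr rfl fun i _ => by ring

lemma sSup_dot_smul {n : ℕ} {A : Set (Fin n → ℝ)} (hA : A.Nonempty) {s : Fin n → ℝ}
    (hbdd : BddAbove ((fun a => dotp a s) '' A)) {t : ℝ} (ht : 0 ≤ t) :
    sSup ((fun a => dotp a (t • s)) '' A) = t * sSup ((fun a => dotp a s) '' A) := by
  have himg : (fun a => dotp a (t • s)) '' A
      = (fun x => t * x) '' ((fun a => dotp a s) '' A) := by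
    rw [Set.image_image]
    exact Set.image_congr fun a _ => dotp_smul_right_s17 a t s
  rw [himg]
  exact (Monotone.map_csSup_of_continuousAt
    ((continuous_const.mul continuous_id).continuousAt)
    (fun x y h => mul_le_mul_of_nonneg_left h ht)
    (hA.image _) hbdd).symm

/-- For a compact Reinhardt set K with K = closure(K ∩ (ℂ*)ⁿ),
    A = Log(K ∩ (ℂ*)ⁿ) nonempty and Γ = ℝ₊S, we have
    K̂^S ∩ (ℂ*)ⁿ = Log⁻¹(Â_Γ), where Â_Γ = {x : ⟨x,ξ⟩ ≤ φ_A(ξ) ∀ ξ ∈ Γ}. -/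
theorem hull_reinhardt_eq_logPreimage (n : ℕ) (S : Set (Fin n → ℝ))
    (hScomp : IsCompact S) (hSconv : Convex ℝ S) (hS0 : (0 : Fin n → ℝ) ∈ S)
    (hSpos : ∀ s ∈ S, ∀ i, 0 ≤ s i)
    (hSrat : S = closure {s ∈ S | ∀ i, ∃ q : ℚ, s i = (q : ℝ)})
    (K : Set (Fin n → ℂ)) (hK : IsCompact K) (hKne : K.Nonempty)
    (hKrein : ∀ z ∈ K, ∀ ζ : Fin n → ℂ, (∀ i, ‖ζ i‖ = 1) →
      (fun i => ζ i * z i) ∈ K)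
    (hKstar : (K ∩ {z | ∀ i, z i ≠ 0}).Nonempty)
    (hKcl : K = closure (K ∩ {z | ∀ i, z i ≠ 0})) :
    hullS S K ∩ {z | ∀ i, z i ≠ 0} =
      {z : Fin n → ℂ | (∀ i, z i ≠ 0) ∧
        ∀ ξ : Fin n → ℝ, (∃ t : ℝ, 0 ≤ t ∧ ∃ s ∈ S, ξ = t • s) →
          dotp (LogC z) ξ ≤
            sSup ((fun a => dotp a ξ) '' (LogC '' (K ∩ {w | ∀ i, w i ≠ 0})))} := by
  classical
  set Ks : Set (Fin n → ℂ) := K ∩ {z | ∀ i, z i ≠ 0} with hKsdef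
  set A : Set (Fin n → ℝ) := LogC '' Ks with hAdef
  have hAne : A.Nonempty := hKstar.image _
  -- a uniform bound on coordinates of K
  obtain ⟨R₀, hR₀⟩ := hK.isBounded.exists_norm_le
  set R : ℝ := max R₀ 1 with hRdef
  have hR1 : (1:ℝ) ≤ R := le_max_right _ _
  have hRw : ∀ w ∈ K, ∀ i, ‖w i‖ ≤ R := fun w hw i =>
    le_trans (norm_le_pi_norm w i) (le_trans (hR₀ w hw) (le_max_left _ _))
  -- boundedness of the linear images of A
  have hbdd : ∀ ξ : Fin n → ℝ, (∀ i, 0 ≤ ξ i) →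
      (∑ i, Real.log R * ξ i) ∈ upperBounds ((fun a => dotp a ξ) '' A) := by
    rintro ξ hξ x ⟨a, ⟨w, hw, rfl⟩, rfl⟩
    refine Finset.sum_le_sum fun i _ => ?_
    refine mul_le_mul_of_nonneg_right ?_ (hξ i)
    exact Real.log_le_log (norm_pos_iff.2 (hw.2 i)) (hRw w hw.1 i)
  have hbdd' : ∀ ξ : Fin n → ℝ, (∀ i, 0 ≤ ξ i) →
      BddAbove ((fun a => dotp a ξ) '' A) := fun ξ hξ => ⟨_, hbdd ξ hξ⟩
  ext z
  simp only [Set.mem_inter_iff, Set.mem_setOf_eq, hullS]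
  constructor
  · rintro ⟨hzh, hz0⟩
    refine ⟨hz0, ?_⟩
    rintro ξ ⟨t, ht, s, hsS, rfl⟩
    suffices key : ∀ s' ∈ S, dotp (LogC z) s' ≤ sSup ((fun a => dotp a s') '' A) by
      rw [dotp_smul_right_s17, sSup_dot_smul hAne (hbdd' s (hSpos s hsS)) ht]
      exact mul_le_mul_of_nonneg_left (key s hsS) ht
    -- first, the case of rational points of S, via monomials
    have keyQ : ∀ s' ∈ S, (∀ i, ∃ q : ℚ, s' i = (q : ℝ)) →
        dotp (LogC z) s' ≤ sSup ((fun a => dotp a s') '' A) := by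
      intro s' hs'S hs'q
      choose q hq using hs'q
      have hq0 : ∀ i, 0 ≤ q i := by
        intro i
        have := hSpos s' hs'S i
        rw [hq i] at this
        exact_mod_cast this
      set m : ℕ := ∏ i, (q i).den with hm
      have hmpos : 0 < m := Finset.prod_pos fun i _ => (q i).pos
      set α : Fin n → ℕ := fun i => (q i).num.toNat * (m / (q i).den) with hα
      have hdvd : ∀ i, (q i).den ∣ m := fun i => Finset.dvd_prod_of_mem _ (Finset.mem_univ i)
      have hαq : ∀ i, ((α i : ℝ)) = (m : ℝ) * s' i := by
        intro i
        rw [hq i]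
        have hden0 : (((q i).den : ℚ)) ≠ 0 := by exact_mod_cast (q i).pos.ne'
        have h1 : (((q i).num.toNat : ℕ) : ℚ) = ((q i).num : ℚ) := by
          have := Int.toNat_of_nonneg (Rat.num_nonneg.2 (hq0 i))
          exact_mod_cast this
        have h2 : ((m / (q i).den : ℕ) : ℚ) = (m : ℚ) / ((q i).den : ℚ) :=
          Nat.cast_div (hdvd i) hden0
        have hnum : ((q i).num : ℚ) = q i * ((q i).den : ℚ) :=
          (div_eq_iff hden0).1 (Rat.num_div_den (q i))
        have hQ : ((α i : ℚ)) = (m : ℚ) * q i := by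
          rw [hα]
          dsimp only
          rw [Nat.cast_mul, h1, h2, hnum]
          field_simp
        exact_mod_cast hQ
      have hαs : (fun i => (α i : ℝ)) = (m : ℝ) • s' := funext fun i => by
        rw [hαq i]; simp
      set pm : (Fin n → ℂ) → ℂ := fun w => ∏ i, w i ^ α i with hpm
      have hpmc : Continuous pm :=
        continuous_finset_prod _ fun i _ => (continuous_apply i).pow _
      have hpoly : IsPolyS S pm := by
        refine ⟨m, Finsupp.single α (1 : ℂ), ?_, ?_⟩
        · intro α' hα'
          rw [Finsupp.support_single_ne_zero _ one_ne_zero, Finset.mem_singleton] at hα'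
          subst hα'
          exact ⟨s', hs'S, hαs⟩
        · funext w
          rw [Finsupp.support_single_ne_zero _ one_ne_zero, Finset.sum_singleton,
            Finsupp.single_eq_same, one_mul]
      have hmain := hzh pm hpoly
      set E : ℝ := sSup ((fun a => dotp a (fun i => (α i : ℝ))) '' A) with hE
      have hα0 : ∀ i, (0:ℝ) ≤ (α i : ℝ) := fun i => by positivity
      have hKsle : ∀ w ∈ Ks, ‖pm w‖ ≤ Real.exp E := by
        intro w hw
        rw [hpm, norm_monomial w hw.2 α]
        exact Real.exp_le_exp.2 (le_csSup (hbdd' _ hα0) ⟨LogC w, ⟨w, hw, rfl⟩, rfl⟩)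
      have hKle : ∀ w ∈ K, ‖pm w‖ ≤ Real.exp E := by
        have hcl : closure Ks ⊆ {w | ‖pm w‖ ≤ Real.exp E} :=
          closure_minimal hKsle (isClosed_le hpmc.norm continuous_const)
        intro w hw
        exact hcl (by rw [← hKcl]; exact hw)
      have hsup_le : sSup ((fun w => ‖pm w‖) '' K) ≤ Real.exp E :=
        csSup_le (hKne.image _) (by rintro x ⟨w, hw, rfl⟩; exact hKle w hw)
      have hzE : dotp (LogC z) (fun i => (α i : ℝ)) ≤ E := by
        have h2 := le_trans hmain hsup_le
        rw [hpm] at h2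
        rw [norm_monomial z hz0 α] at h2
        exact Real.exp_le_exp.1 h2
      rw [hE, hαs, dotp_smul_right_s17,
        sSup_dot_smul hAne (hbdd' s' (hSpos s' hs'S)) (by positivity : (0:ℝ) ≤ (m:ℝ))] at hzE
      exact le_of_mul_le_mul_left hzE (by exact_mod_cast hmpos)
    -- now the general case by approximation
    intro s' hs'S
    have hscl : s' ∈ closure {s'' ∈ S | ∀ i, ∃ q : ℚ, s'' i = (q : ℝ)} := by
      rw [← hSrat]; exact hs'S
    obtain ⟨u, huQ, hu⟩ := mem_closure_iff_seq_limit.1 hscl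
    have huS : ∀ k, u k ∈ S := fun k => (huQ k).1
    have hukey : ∀ k, dotp (LogC z) (u k) ≤ sSup ((fun a => dotp a (u k)) '' A) :=
      fun k => keyQ (u k) (huQ k).1 (huQ k).2
    have hchoice : ∀ k : ℕ, ∃ w ∈ Ks,
        dotp (LogC z) (u k) - 1 / ((k : ℝ) + 1) < dotp (LogC w) (u k) := by
      intro k
      have hpos : (0:ℝ) < 1 / ((k : ℝ) + 1) := by positivity
      have hlt : dotp (LogC z) (u k) - 1 / ((k : ℝ) + 1)
          < sSup ((fun a => dotp a (u k)) '' A) :=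
        lt_of_lt_of_le (by linarith) (hukey k)
      obtain ⟨x, ⟨a, ⟨w, hw, rfl⟩, rfl⟩, hx⟩ := exists_lt_of_lt_csSup (hAne.image _) hlt
      exact ⟨w, hw, hx⟩
    choose w hwKs hwlt using hchoice
    obtain ⟨winf, hwinfK, g, hg, hconv⟩ := hK.tendsto_subseq (fun k => (hwKs k).1)
    set P : Finset (Fin n) := Finset.univ.filter (fun i => s' i ≠ 0) with hP
    obtain ⟨B₀, hB₀⟩ := hScomp.isBounded.exists_norm_le
    set B : ℝ := max B₀ 1 with hB
    have hB0 : (0:ℝ) ≤ B := le_trans zero_le_one (le_max_right _ _)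
    have hBB : ∀ s'' ∈ S, ∀ i, s'' i ≤ B := fun s'' hs'' i =>
      le_trans (le_trans (le_abs_self _) (norm_le_pi_norm s'' i))
        (le_trans (hB₀ s'' hs'') (le_max_left _ _))
    set C₀ : ℝ := Real.log R with hC₀def
    have hC₀ : 0 ≤ C₀ := Real.log_nonneg hR1
    have hlog_le : ∀ v ∈ Ks, ∀ i, Real.log ‖v i‖ ≤ C₀ := fun v hv i =>
      Real.log_le_log (norm_pos_iff.2 (hv.2 i)) (hRw v hv.1 i)
    set W : ℕ → (Fin n → ℂ) := fun j => w (g j) with hW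
    set U : ℕ → (Fin n → ℝ) := fun j => u (g j) with hU
    have hUtend : Filter.Tendsto U Filter.atTop (𝓝 s') := hu.comp hg.tendsto_atTop
    have hUtendi : ∀ i, Filter.Tendsto (fun j => U j i) Filter.atTop (𝓝 (s' i)) :=
      fun i => ((continuous_apply i).tendsto s').comp hUtend
    have hWKs : ∀ j, W j ∈ Ks := fun j => hwKs (g j)
    have hU0 : ∀ j i, 0 ≤ U j i := fun j i => hSpos _ (huS (g j)) i
    have hUB : ∀ j i, U j i ≤ B := fun j i => hBB _ (huS (g j)) i
    have hWnorm : ∀ i, Filter.Tendsto (fun j => ‖W j i‖) Filter.atTop (𝓝 ‖winf i‖) := by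
      intro i
      have h1 : Filter.Tendsto (fun j => W j i) Filter.atTop (𝓝 (winf i)) :=
        ((continuous_apply i).tendsto winf).comp hconv
      exact h1.norm
    -- the quantity converging to dotp (LogC z) s'
    set L : ℝ := dotp (LogC z) s' with hL
    set qq : ℕ → ℝ := fun j =>
      dotp (LogC z) (U j) - 1 / ((g j : ℝ) + 1) - ∑ i ∈ Pᶜ, C₀ * U j i with hqq
    have hq1 : Filter.Tendsto (fun j => dotp (LogC z) (U j)) Filter.atTop (𝓝 L) := by
      have h : Filter.Tendsto (fun j => ∑ i, LogC z i * U j i) Filter.atTop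
          (𝓝 (∑ i, LogC z i * s' i)) :=
        tendsto_finset_sum _ fun i _ => tendsto_const_nhds.mul (hUtendi i)
      exact h
    have hq2 : Filter.Tendsto (fun j => 1 / ((g j : ℝ) + 1)) Filter.atTop (𝓝 0) :=
      tendsto_one_div_add_atTop_nhds_zero_nat.comp hg.tendsto_atTop
    have hq3 : Filter.Tendsto (fun j => ∑ i ∈ Pᶜ, C₀ * U j i) Filter.atTop (𝓝 0) := by
      have h0 : (0:ℝ) = ∑ i ∈ Pᶜ, C₀ * s' i := by
        rw [Finset.sum_eq_zero]
        intro i hi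
        have : s' i = 0 := by
          have := Finset.mem_compl.1 hi
          simp only [hP, Finset.mem_filter, Finset.mem_univ, true_and, not_not] at this
          exact this
        rw [this, mul_zero]
      rw [h0]
      exact tendsto_finset_sum _ fun i _ => tendsto_const_nhds.mul (hUtendi i)
    have hqtend : Filter.Tendsto qq Filter.atTop (𝓝 L) := by
      have h := (hq1.sub hq2).sub hq3
      rw [sub_zero, sub_zero] at h
      exact h
    set F : ℕ → ℝ := fun j => ∑ i ∈ P, Real.log ‖W j i‖ * U j i with hF
    have hcompl : (Finset.univ.filter (fun i => ¬ s' i ≠ 0)) = Pᶜ := by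
      rw [hP, Finset.compl_filter]
    have hsplit : ∀ j, dotp (LogC (W j)) (U j)
        = F j + ∑ i ∈ Pᶜ, Real.log ‖W j i‖ * U j i := by
      intro j
      have h := (Finset.sum_filter_add_sum_filter_not Finset.univ (fun i => s' i ≠ 0)
        (fun i => Real.log ‖W j i‖ * U j i)).symm
      rw [hcompl] at h
      exact h
    have hEQ : ∀ j, ∑ i ∈ Pᶜ, Real.log ‖W j i‖ * U j i ≤ ∑ i ∈ Pᶜ, C₀ * U j i :=
      fun j => Finset.sum_le_sum fun i _ =>
        mul_le_mul_of_nonneg_right (hlog_le _ (hWKs j) i) (hU0 j i)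
    have hFlow : ∀ j, qq j ≤ F j := by
      intro j
      have h1 : dotp (LogC z) (U j) - 1 / ((g j : ℝ) + 1) < dotp (LogC (W j)) (U j) :=
        hwlt (g j)
      have h2 := hsplit j
      have h3 := hEQ j
      have h4 : qq j = dotp (LogC z) (U j) - 1 / ((g j : ℝ) + 1)
          - ∑ i ∈ Pᶜ, C₀ * U j i := rfl
      rw [h4]
      linarith
    -- coordinates in P do not vanish in the limit
    set Lo : ℝ := min 0 (L - 1 - (n : ℝ) * (C₀ * B)) with hLo
    have hLo0 : Lo ≤ 0 := min_le_left _ _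
    have hterm_ub : ∀ j, ∀ i, Real.log ‖W j i‖ * U j i ≤ C₀ * B := by
      intro j i
      rcases le_or_gt (Real.log ‖W j i‖) 0 with h | h
      · exact le_trans (mul_nonpos_of_nonpos_of_nonneg h (hU0 j i)) (by positivity)
      · exact mul_le_mul (hlog_le _ (hWKs j) i) (hUB j i) (hU0 j i) hC₀
    have hWP : ∀ i ∈ P, winf i ≠ 0 := by
      intro i₀ hi₀
      have hsipos : 0 < s' i₀ := by
        have h1 : s' i₀ ≠ 0 := (Finset.mem_filter.1 hi₀).2
        exact lt_of_le_of_ne (hSpos s' hs'S i₀) (Ne.symm h1)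
      have hev1 : ∀ᶠ j in Filter.atTop, L - 1 < qq j :=
        hqtend.eventually (lt_mem_nhds (show L - 1 < L by linarith))
      have hev2 : ∀ᶠ j in Filter.atTop, s' i₀ / 2 < U j i₀ :=
        (hUtendi i₀).eventually (lt_mem_nhds (show s' i₀ / 2 < s' i₀ by linarith))
      have hev : ∀ᶠ j in Filter.atTop,
          Real.exp (Lo / (s' i₀ / 2)) ≤ ‖W j i₀‖ := by
        filter_upwards [hev1, hev2] with j hj1 hj2
        have hFj : L - 1 < F j := lt_of_lt_of_le hj1 (hFlow j)
        -- single term lower bound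
        have hterm : Lo ≤ Real.log ‖W j i₀‖ * U j i₀ := by
          have hsum : F j = Real.log ‖W j i₀‖ * U j i₀
              + ∑ i ∈ P.erase i₀, Real.log ‖W j i‖ * U j i :=
            (Finset.add_sum_erase P _ hi₀).symm
          have hrest : ∑ i ∈ P.erase i₀, Real.log ‖W j i‖ * U j i ≤ (n : ℝ) * (C₀ * B) := by
            calc ∑ i ∈ P.erase i₀, Real.log ‖W j i‖ * U j i
                ≤ ∑ _i ∈ P.erase i₀, C₀ * B := Finset.sum_le_sum fun i _ => hterm_ub j i
              _ = ((P.erase i₀).card : ℝ) * (C₀ * B) := by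
                  rw [Finset.sum_const, nsmul_eq_mul]
              _ ≤ (n : ℝ) * (C₀ * B) := by
                  refine mul_le_mul_of_nonneg_right ?_ (by positivity)
                  have h6 : (P.erase i₀).card ≤ n := by
                    simpa using Finset.card_le_univ (P.erase i₀)
                  exact_mod_cast h6
          have : L - 1 - (n : ℝ) * (C₀ * B) ≤ Real.log ‖W j i₀‖ * U j i₀ := by
            linarith
          exact le_trans (min_le_right _ _) this
        have hs2 : 0 < s' i₀ / 2 := by linarith
        have hlog : Lo / (s' i₀ / 2) ≤ Real.log ‖W j i₀‖ := by
          rw [div_le_iff₀ hs2]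
          rcases le_or_gt 0 (Real.log ‖W j i₀‖) with h | h
          · nlinarith
          · have h5 : Real.log ‖W j i₀‖ * U j i₀ ≤ Real.log ‖W j i₀‖ * (s' i₀ / 2) := by
              exact mul_le_mul_of_nonpos_left (le_of_lt hj2) h.le
            linarith
        calc Real.exp (Lo / (s' i₀ / 2)) ≤ Real.exp (Real.log ‖W j i₀‖) :=
              Real.exp_le_exp.2 hlog
          _ = ‖W j i₀‖ := Real.exp_log (norm_pos_iff.2 ((hWKs j).2 i₀))
      have hnorm : Real.exp (Lo / (s' i₀ / 2)) ≤ ‖winf i₀‖ :=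
        ge_of_tendsto (hWnorm i₀) hev
      have : 0 < ‖winf i₀‖ := lt_of_lt_of_le (Real.exp_pos _) hnorm
      exact norm_pos_iff.1 this
    -- pass to the limit in F
    have hWlog : ∀ i ∈ P, Filter.Tendsto (fun j => Real.log ‖W j i‖) Filter.atTop
        (𝓝 (Real.log ‖winf i‖)) := fun i hi =>
      ((Real.continuousAt_log (by simpa using hWP i hi)).tendsto).comp (hWnorm i)
    have hFtend : Filter.Tendsto F Filter.atTop
        (𝓝 (∑ i ∈ P, Real.log ‖winf i‖ * s' i)) :=
      tendsto_finset_sum _ fun i hi => (hWlog i hi).mul (hUtendi i)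
    have hL_le : L ≤ ∑ i ∈ P, Real.log ‖winf i‖ * s' i :=
      le_of_tendsto_of_tendsto' hqtend hFtend hFlow
    -- approximate winf by points of Ks
    have hwinfcl : winf ∈ closure Ks := by rw [← hKcl]; exact hwinfK
    obtain ⟨v, hvKs, hvconv⟩ := mem_closure_iff_seq_limit.1 hwinfcl
    have hvtend : Filter.Tendsto (fun j => dotp (LogC (v j)) s') Filter.atTop
        (𝓝 (∑ i ∈ P, Real.log ‖winf i‖ * s' i)) := by
      have heq : ∀ j, dotp (LogC (v j)) s' = ∑ i ∈ P, Real.log ‖v j i‖ * s' i := by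
        intro j
        rw [dotp, hP]
        rw [← Finset.sum_filter_add_sum_filter_not Finset.univ (fun i => s' i ≠ 0)
          (fun i => LogC (v j) i * s' i)]
        have hzero : ∑ i ∈ Finset.univ.filter (fun i => ¬ s' i ≠ 0),
            LogC (v j) i * s' i = 0 := by
          refine Finset.sum_eq_zero fun i hi => ?_
          have : s' i = 0 := not_not.1 (Finset.mem_filter.1 hi).2
          rw [this, mul_zero]
        rw [hzero, add_zero]
        rfl
      simp only [heq]
      refine tendsto_finset_sum _ fun i hi => ?_
      have hnormi : Filter.Tendsto (fun j => ‖v j i‖) Filter.atTop (𝓝 ‖winf i‖) := by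
        have h1 : Filter.Tendsto (fun j => v j i) Filter.atTop (𝓝 (winf i)) :=
          ((continuous_apply i).tendsto winf).comp hvconv
        exact h1.norm
      exact (((Real.continuousAt_log (by simpa using hWP i hi)).tendsto).comp hnormi).mul
        tendsto_const_nhds
    have hvle : ∀ j, dotp (LogC (v j)) s' ≤ sSup ((fun a => dotp a s') '' A) := fun j =>
      le_csSup (hbdd' s' (hSpos s' hs'S)) ⟨LogC (v j), ⟨v j, hvKs j, rfl⟩, rfl⟩
    have hfinal : ∑ i ∈ P, Real.log ‖winf i‖ * s' i ≤ sSup ((fun a => dotp a s') '' A) :=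
      le_of_tendsto hvtend (Filter.Eventually.of_forall hvle)
    exact le_trans hL_le hfinal
  · rintro ⟨hz0, hineq⟩
    refine ⟨?_, hz0⟩
    rintro p ⟨m, c, hexp, rfl⟩
    set p : (Fin n → ℂ) → ℂ := fun z => ∑ α ∈ c.support, c α * ∏ i, z i ^ (α i) with hpdef
    have hpc : Continuous p := by
      apply continuous_finset_sum
      exact fun α _ => continuous_const.mul
        (continuous_finset_prod _ fun i _ => (continuous_apply i).pow _)
    set M : ℝ := sSup ((fun w => ‖p w‖) '' K) with hMdef
    have hMb : BddAbove ((fun w => ‖p w‖) '' K) :=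
      (hK.bddAbove_image (hpc.norm.continuousOn))
    have hple : ∀ v ∈ K, ‖p v‖ ≤ M := fun v hv => le_csSup hMb ⟨v, hv, rfl⟩
    obtain ⟨w₀, hw₀⟩ := hKne
    have hM0 : 0 ≤ M := le_trans (norm_nonneg _) (hple w₀ hw₀)
    set D₀ : ℕ := c.support.sup (fun α => Finset.univ.sup α) with hD₀
    -- main estimate for every power
    refine growth_le n D₀ (norm_nonneg _) hM0 ?_
    intro k hk
    set T := Fintype.piFinset fun _ : Fin k => c.support with hT
    set σ : (Fin k → (Fin n → ℕ)) → (Fin n → ℕ) := fun f => (fun i => ∑ t, f t i) with hσ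
    set Dk := T.image σ with hDk
    set Cc : (Fin n → ℕ) → ℂ := fun β => ∑ f ∈ T.filter (fun f => σ f = β), ∏ t, c (f t)
      with hCc
    have hqk : ∀ v, (p v) ^ k = ∑ β ∈ Dk, Cc β * ∏ i, v i ^ β i := fun v => pow_expand k c v
    have hβle : ∀ β ∈ Dk, ∀ i, β i ≤ k * D₀ := by
      rintro β hβ i
      obtain ⟨f, hf, rfl⟩ := Finset.mem_image.1 hβ
      have : ∀ t, f t i ≤ D₀ := fun t => by
        have h1 : f t ∈ c.support := Fintype.mem_piFinset.1 hf t
        exact le_trans (Finset.le_sup (Finset.mem_univ i)) (Finset.le_sup h1)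
      calc σ f i = ∑ t, f t i := rfl
        _ ≤ ∑ _t : Fin k, D₀ := Finset.sum_le_sum fun t _ => this t
        _ = k * D₀ := by rw [Finset.sum_const, Finset.card_univ, Fintype.card_fin, smul_eq_mul]
    have hDkcard : (Dk.card : ℝ) ≤ ((k * D₀ + 1 : ℕ) : ℝ) ^ n := by
      have hsub : Dk ⊆ Fintype.piFinset fun _ : Fin n => Finset.range (k * D₀ + 1) := by
        intro β hβ
        refine Fintype.mem_piFinset.2 fun i => Finset.mem_range.2 ?_
        exact Nat.lt_succ_of_le (hβle β hβ i)
      have := Finset.card_le_card hsub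
      rw [Fintype.card_piFinset] at this
      simp only [Finset.card_range, Finset.prod_const, Finset.card_univ, Fintype.card_fin] at this
      exact_mod_cast le_trans this (le_of_eq rfl)
    -- each exponent lies in the cone
    have hβΓ : ∀ β ∈ Dk, ∃ t : ℝ, 0 ≤ t ∧ ∃ s ∈ S, (fun i => (β i : ℝ)) = t • s := by
      rintro β hβ
      obtain ⟨f, hf, rfl⟩ := Finset.mem_image.1 hβ
      choose sf hsfS hsfe using fun t => hexp (f t) (Fintype.mem_piFinset.1 hf t)
      refine ⟨(m : ℝ) * k, by positivity, ∑ t, ((k : ℝ)⁻¹) • sf t, ?_, ?_⟩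
      · refine hSconv.sum_mem (fun t _ => by positivity) ?_ (fun t _ => hsfS t)
        rw [Finset.sum_const, Finset.card_univ, Fintype.card_fin, nsmul_eq_mul]
        field_simp
      · funext i
        have hcast : ((σ f i : ℕ) : ℝ) = ∑ t, ((f t i : ℕ) : ℝ) := by
          rw [hσ]; push_cast; rfl
        have hfti : ∀ t, ((f t i : ℕ) : ℝ) = (m : ℝ) * sf t i := fun t =>
          congrFun (hsfe t) i
        rw [hcast, Finset.sum_congr rfl fun t _ => hfti t]
        simp only [Pi.smul_apply, smul_eq_mul, Finset.sum_apply, ← Finset.mul_sum]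
        have hk0 : (k : ℝ) ≠ 0 := by positivity
        field_simp
    -- the coefficient estimate
    have hcoef : ∀ β ∈ Dk,
        ‖Cc β‖ * Real.exp (sSup ((fun a => dotp a (fun i => (β i : ℝ))) '' A)) ≤ M ^ k := by
      intro β hβ
      have hMk : ∀ v ∈ K, ‖(p v) ^ k‖ ≤ M ^ k := fun v hv => by
        rw [norm_pow]; exact pow_le_pow_left₀ (norm_nonneg _) (hple v hv) k
      have hcw : ∀ w ∈ K, ‖Cc β‖ * ‖∏ i, w i ^ β i‖ ≤ M ^ k := fun w hw =>
        cauchy_estimate hKrein Dk Cc (fun v => (p v) ^ k) hqk hMk hw hβ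
      obtain ⟨w₁, hw₁⟩ := hKstar
      by_cases hC0 : ‖Cc β‖ = 0
      · rw [hC0, zero_mul]; positivity
      · have hCpos : 0 < ‖Cc β‖ := lt_of_le_of_ne (norm_nonneg _) (Ne.symm hC0)
        have hMkpos : 0 < M ^ k := by
          have := hcw w₁ hw₁.1
          have hwpos : 0 < ‖∏ i, w₁ i ^ β i‖ := by
            rw [norm_prod]
            refine Finset.prod_pos fun i _ => ?_
            rw [norm_pow]
            exact pow_pos (norm_pos_iff.2 (hw₁.2 i)) _
          nlinarith
        rw [← le_div_iff₀' hCpos]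
        have hsup : sSup ((fun a => dotp a (fun i => (β i : ℝ))) '' A)
            ≤ Real.log (M ^ k / ‖Cc β‖) := by
          refine csSup_le (hAne.image _) ?_
          rintro x ⟨a, ⟨w, hw, rfl⟩, rfl⟩
          rw [Real.le_log_iff_exp_le (by positivity)]
          rw [le_div_iff₀' hCpos]
          have := hcw w hw.1
          rwa [norm_monomial w hw.2 β] at this
        calc Real.exp (sSup ((fun a => dotp a (fun i => (β i : ℝ))) '' A))
            ≤ Real.exp (Real.log (M ^ k / ‖Cc β‖)) := Real.exp_le_exp.2 hsup
          _ = M ^ k / ‖Cc β‖ := Real.exp_log (by positivity)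
    -- put everything together
    calc ‖p z‖ ^ k = ‖(p z) ^ k‖ := (norm_pow _ _).symm
      _ = ‖∑ β ∈ Dk, Cc β * ∏ i, z i ^ β i‖ := by rw [hqk]
      _ ≤ ∑ β ∈ Dk, ‖Cc β * ∏ i, z i ^ β i‖ := norm_sum_le _ _
      _ ≤ ∑ _β ∈ Dk, M ^ k := by
          refine Finset.sum_le_sum fun β hβ => ?_
          rw [norm_mul, norm_monomial z hz0 β]
          have h1 := hineq (fun i => (β i : ℝ)) (hβΓ β hβ)
          have h2 : Real.exp (dotp (LogC z) (fun i => (β i : ℝ)))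
              ≤ Real.exp (sSup ((fun a => dotp a (fun i => (β i : ℝ))) '' A)) :=
            Real.exp_le_exp.2 h1
          calc ‖Cc β‖ * Real.exp (dotp (LogC z) fun i => (β i : ℝ))
              ≤ ‖Cc β‖ * Real.exp (sSup ((fun a => dotp a (fun i => (β i : ℝ))) '' A)) :=
                mul_le_mul_of_nonneg_left h2 (norm_nonneg _)
            _ ≤ M ^ k := hcoef β hβ
      _ = (Dk.card : ℝ) * M ^ k := by rw [Finset.sum_const, nsmul_eq_mul]
      _ ≤ ((k * D₀ + 1 : ℕ) : ℝ) ^ n * M ^ k :=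
          mul_le_mul_of_nonneg_right hDkcard (by positivity)
end
end
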